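/- arXiv:1401.2186 — 4 statements merged into one kernel-verified Lean document; each statement's English description precedes it below -/
import Mathlib

section
/- Let T and T' be two N×N stochastic matrices with strictly positive entries, and suppose T ≠ T'. If X is an N×N complex matrix that is diagonal and satisfies Σ_j √(T'_{i,j}) · X_{j,j} · √(T_{i,j}) = X_{i,i} for all i ∈ Z_N, then X = 0. -/
open scoped BigOperators

private lemma amgm (a b : ℝ) (ha : 0 ≤ a) (hb : 0 ≤ b) :
    Real.sqrt a * Real.sqrt b ≤ (a + b) / 2 := by
  nlinarith [sq_nonneg (Real.sqrt a - Real.sqrt b), Real.sq_sqrt ha, Real.sq_sqrt hb,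
    Real.sqrt_nonneg a, Real.sqrt_nonneg b]

private lemma amgm_eq (a b : ℝ) (ha : 0 ≤ a) (hb : 0 ≤ b)
    (h : Real.sqrt a * Real.sqrt b = (a + b) / 2) : a = b := by
  nlinarith [Real.sq_sqrt ha, Real.sq_sqrt hb, Real.sqrt_nonneg a, Real.sqrt_nonneg b,
    sq_nonneg (Real.sqrt a - Real.sqrt b)]

theorem diagonal_intertwiner_zero_of_ne {N : ℕ}
    (T T' : Matrix (Fin N) (Fin N) ℝ)
    (hT : ∀ i j, 0 < T i j) (hT' : ∀ i j, 0 < T' i j)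
    (hrow : ∀ i, ∑ j, T i j = 1) (hrow' : ∀ i, ∑ j, T' i j = 1)
    (hne : T ≠ T')
    (X : Matrix (Fin N) (Fin N) ℂ) (hdiag : X.IsDiag)
    (hX : ∀ i, ∑ j, (Real.sqrt (T' i j) : ℂ) * X j j * (Real.sqrt (T i j) : ℂ)
      = X i i) :
    X = 0 := by
  rcases Nat.eq_zero_or_pos N with hN0 | hN0
  · subst hN0; ext i j; exact i.elim0
  set c : Fin N → Fin N → ℝ := fun i j => Real.sqrt (T' i j) * Real.sqrt (T i j) with hc
  have hcpos : ∀ i j, 0 < c i j := fun i j =>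
    mul_pos (Real.sqrt_pos.2 (hT' i j)) (Real.sqrt_pos.2 (hT i j))
  have hS_le : ∀ i, ∑ j, c i j ≤ 1 := by
    intro i
    calc ∑ j, c i j ≤ ∑ j, (T' i j + T i j) / 2 :=
          Finset.sum_le_sum fun j _ => amgm _ _ (hT' i j).le (hT i j).le
      _ = 1 := by
          rw [← Finset.sum_div, Finset.sum_add_distrib, hrow, hrow']; norm_num
  set f : Fin N → ℝ := fun j => ‖X j j‖ with hf
  have hbound : ∀ i, f i ≤ ∑ j, c i j * f j := by
    intro i
    have : f i = ‖∑ j, (Real.sqrt (T' i j) : ℂ) * X j j * (Real.sqrt (T i j) : ℂ)‖ := by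
      rw [hX i]
    rw [this]
    calc ‖∑ j, (Real.sqrt (T' i j) : ℂ) * X j j * (Real.sqrt (T i j) : ℂ)‖
        ≤ ∑ j, ‖(Real.sqrt (T' i j) : ℂ) * X j j * (Real.sqrt (T i j) : ℂ)‖ :=
          norm_sum_le _ _
      _ = ∑ j, c i j * f j := by
          refine Finset.sum_congr rfl fun j _ => ?_
          rw [norm_mul, norm_mul, Complex.norm_real, Complex.norm_real,
            Real.norm_of_nonneg (Real.sqrt_nonneg _), Real.norm_of_nonneg (Real.sqrt_nonneg _)]
          simp only [hc, hf]
          ring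
  obtain ⟨i₀, -, hi₀⟩ := Finset.exists_max_image (Finset.univ : Finset (Fin N)) f
    ⟨⟨0, hN0⟩, Finset.mem_univ _⟩
  set M := f i₀ with hM
  have hfM : ∀ j, f j ≤ M := fun j => hi₀ j (Finset.mem_univ j)
  have hMnonneg : 0 ≤ M := norm_nonneg _
  by_cases hM0 : M = 0
  · ext i j
    by_cases hij : i = j
    · subst hij
      have hfi : f i = 0 := le_antisymm (hM0 ▸ hfM i) (norm_nonneg _)
      have : ‖X i i‖ = 0 := hfi
      simpa [map_eq_zero] using this
    · simpa using hdiag hij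
  · exfalso
    have hMpos : 0 < M := lt_of_le_of_ne hMnonneg (Ne.symm hM0)
    have hall : ∀ j, f j = M := by
      intro j
      by_contra hj
      have hjlt : f j < M := lt_of_le_of_ne (hfM j) hj
      have h1 : ∑ k, c i₀ k * f k < ∑ k, c i₀ k * M := by
        apply Finset.sum_lt_sum
        · exact fun k _ => mul_le_mul_of_nonneg_left (hfM k) (hcpos i₀ k).le
        · exact ⟨j, Finset.mem_univ j, mul_lt_mul_of_pos_left hjlt (hcpos i₀ j)⟩
      have h2 : ∑ k, c i₀ k * M ≤ M := by
        rw [← Finset.sum_mul]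
        calc (∑ k, c i₀ k) * M ≤ 1 * M :=
              mul_le_mul_of_nonneg_right (hS_le i₀) hMnonneg
          _ = M := one_mul M
      have := hbound i₀
      linarith
    have hSge : ∀ i, 1 ≤ ∑ j, c i j := by
      intro i
      have hb := hbound i
      rw [hall i] at hb
      have hb2 : M ≤ (∑ j, c i j) * M := by
        calc M ≤ ∑ j, c i j * f j := hb
          _ = (∑ j, c i j) * M := by
              rw [Finset.sum_mul]
              exact Finset.sum_congr rfl fun j _ => by rw [hall j]
      nlinarith
    apply hne
    ext i j
    have hSeq : ∑ k, c i k = 1 := le_antisymm (hS_le i) (hSge i)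
    have hsum0 : ∑ k, ((T' i k + T i k) / 2 - c i k) = 0 := by
      rw [Finset.sum_sub_distrib, hSeq, ← Finset.sum_div, Finset.sum_add_distrib, hrow, hrow']
      norm_num
    have hterm := (Finset.sum_eq_zero_iff_of_nonneg
      (fun k _ => sub_nonneg.2 (amgm _ _ (hT' i k).le (hT i k).le))).1 hsum0 j (Finset.mem_univ j)
    have heq := amgm_eq (T' i j) (T i j) (hT' i j).le (hT i j).le (by
      have : c i j = Real.sqrt (T' i j) * Real.sqrt (T i j) := rfl
      linarith)
    exact heq.symm
end

section
/- Two distinct Markov measures on (Z_N)^ℕ with strictly positive stochastic transition matrices T ≠ T' (with respective positive stationary vectors λ, λ') are mutually singular. -/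
open MeasureTheory ENNReal

noncomputable section

abbrev Word (N : ℕ) := ℕ → Fin N

/-- The left shift `σ` deleting the first letter. -/
def shift {N : ℕ} (ω : Word N) : Word N := fun n => ω (n + 1)

/-- The map `σ_i` prepending the letter `i`. -/
def prepend {N : ℕ} (i : Fin N) (ω : Word N) : Word N :=
  fun n => match n with
  | 0 => i
  | n + 1 => ω n

/-- The cylinder set determined by a finite word. -/
def cyl {N : ℕ} (w : List (Fin N)) : Set (Word N) :=
  {ω | ∀ k : Fin w.length, ω k = w.get k}

/-- The Markov weight of a chain starting at `i`. -/
def chainProd {N : ℕ} (T : Fin N → Fin N → ℝ) : Fin N → List (Fin N) → ℝ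
  | _, [] => 1
  | i, j :: rest => T i j * chainProd T j rest

/-- The Markov measure of the cylinder determined by a finite word:
`μ(C(i₁…iₙ)) = λ_{i₁} T_{i₁,i₂}⋯T_{i_{n-1},i_n}`. -/
def markovCyl {N : ℕ} (lam : Fin N → ℝ) (T : Fin N → Fin N → ℝ) : List (Fin N) → ℝ
  | [] => 1
  | i :: rest => lam i * chainProd T i rest

/-! ### Auxiliary real-number lemmas -/

lemma sqrt_mul_le_half (a b : ℝ) (ha : 0 ≤ a) (hb : 0 ≤ b) :
    Real.sqrt (a * b) ≤ (a + b) / 2 := by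
  have h : a * b ≤ ((a + b) / 2) ^ 2 := by nlinarith [sq_nonneg (a - b)]
  calc Real.sqrt (a * b) ≤ Real.sqrt (((a + b) / 2) ^ 2) := Real.sqrt_le_sqrt h
    _ = (a + b) / 2 := Real.sqrt_sq (by linarith)

lemma sqrt_mul_lt_half (a b : ℝ) (ha : 0 ≤ a) (hb : 0 ≤ b) (hab : a ≠ b) :
    Real.sqrt (a * b) < (a + b) / 2 := by
  have h : a * b < ((a + b) / 2) ^ 2 := by
    rcases lt_or_gt_of_ne hab with h | h <;> nlinarith [sq_nonneg (a - b)]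
  have hab2 : 0 < (a + b) / 2 := by
    rcases eq_or_lt_of_le ha with h' | h' <;> rcases eq_or_lt_of_le hb with h'' | h''
    · exfalso; exact hab (h'.symm.trans h'')
    all_goals linarith
  calc Real.sqrt (a * b) < Real.sqrt (((a + b) / 2) ^ 2) :=
        Real.sqrt_lt_sqrt (mul_nonneg ha hb) h
    _ = (a + b) / 2 := Real.sqrt_sq (by linarith)

lemma chainProd_nonneg {N : ℕ} {T : Fin N → Fin N → ℝ} (hT : ∀ i j, 0 ≤ T i j) :
    ∀ (w : List (Fin N)) (i : Fin N), 0 ≤ chainProd T i w := by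
  intro w
  induction w with
  | nil => intro i; simp [chainProd]
  | cons j rest ih => intro i; exact mul_nonneg (hT i j) (ih j)

/-! ### The matrix iteration -/

def fseq {N : ℕ} (S : Fin N → Fin N → ℝ) : ℕ → Fin N → ℝ
  | 0, _ => 1
  | n+1, i => ∑ j, S i j * fseq S n j

lemma fseq_step_le {N : ℕ} {S : Fin N → Fin N → ℝ} (hS : ∀ i j, 0 ≤ S i j)
    {n : ℕ} {a : ℝ} (hf : ∀ j, fseq S n j ≤ a) (i : Fin N) :
    fseq S (n+1) i ≤ (∑ j, S i j) * a := by
  rw [show fseq S (n+1) i = ∑ j, S i j * fseq S n j from rfl, Finset.sum_mul]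
  exact Finset.sum_le_sum fun j _ => mul_le_mul_of_nonneg_left (hf j) (hS i j)

open Finset in
lemma fseq_decay {N : ℕ} {S : Fin N → Fin N → ℝ} (hS : ∀ i j, 0 ≤ S i j)
    (hrowS : ∀ i, ∑ j, S i j ≤ 1) {i₀ : Fin N} {ε m : ℝ} (hε : 0 < ε)
    (hm : 0 < m) (hi₀ : ∑ j, S i₀ j ≤ 1 - ε) (hmS : ∀ j, m ≤ S j i₀) :
    ∀ k, (∀ i, fseq S (2*k+1) i ≤ (1 - ε*m)^k) ∧
      fseq S (2*k+1) i₀ ≤ (1-ε) * (1 - ε*m)^k := by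
  have hrow0 : ∀ i, (0:ℝ) ≤ ∑ j, S i j := fun i => Finset.sum_nonneg fun j _ => hS i j
  have hε1 : ε ≤ 1 := by have := hrow0 i₀; linarith
  have hm1 : m ≤ 1 - ε := by
    have h1 : m ≤ S i₀ i₀ := hmS i₀
    have h2 : S i₀ i₀ ≤ ∑ j, S i₀ j :=
      Finset.single_le_sum (fun j _ => hS i₀ j) (Finset.mem_univ i₀)
    linarith
  have hc0 : 0 ≤ 1 - ε*m := by nlinarith
  have key : ∀ (n : ℕ) (a : ℝ), 0 ≤ a → (∀ j, fseq S n j ≤ a) →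
      fseq S n i₀ ≤ (1-ε)*a → ∀ i, fseq S (n+1) i ≤ (1 - ε*m) * a := by
    intro n a ha hf hfi₀ i
    have expand : fseq S (n+1) i = ∑ j, S i j * fseq S n j := rfl
    rw [expand, ← Finset.add_sum_erase _ _ (Finset.mem_univ i₀)]
    have h1 : S i i₀ * fseq S n i₀ ≤ S i i₀ * ((1-ε)*a) :=
      mul_le_mul_of_nonneg_left hfi₀ (hS i i₀)
    have h2 : ∑ j ∈ univ.erase i₀, S i j * fseq S n j ≤ ∑ j ∈ univ.erase i₀, S i j * a :=
      Finset.sum_le_sum fun j _ => mul_le_mul_of_nonneg_left (hf j) (hS i j)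
    have h3 : ∑ j ∈ univ.erase i₀, S i j * a = ((∑ j, S i j) - S i i₀) * a := by
      rw [← Finset.sum_mul]
      congr 1
      rw [Finset.sum_erase_eq_sub (Finset.mem_univ i₀)]
    have h4 : S i i₀ * ((1-ε)*a) + ((∑ j, S i j) - S i i₀) * a ≤ (1 - ε*m) * a := by
      have h5 : S i i₀ * ((1-ε)*a) + ((∑ j, S i j) - S i i₀) * a
          = ((∑ j, S i j) - ε * S i i₀) * a := by ring
      rw [h5]
      apply mul_le_mul_of_nonneg_right _ ha
      have := hmS i
      have := hrowS i
      nlinarith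
    linarith
  intro k
  induction k with
  | zero =>
    constructor
    · intro i
      have := fseq_step_le hS (n := 0) (a := 1) (fun j => le_refl 1) i
      rw [mul_one] at this
      simpa using (this.trans (hrowS i))
    · have := fseq_step_le hS (n := 0) (a := 1) (fun j => le_refl 1) i₀
      rw [mul_one] at this
      simpa using (this.trans hi₀)
  | succ k ih =>
    have hpow : (0:ℝ) ≤ (1 - ε*m)^k := pow_nonneg hc0 k
    have heven : ∀ i, fseq S (2*k+2) i ≤ (1 - ε*m)^(k+1) := by
      intro i
      have := key (2*k+1) ((1-ε*m)^k) hpow ih.1 ih.2 i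
      calc fseq S (2*k+2) i ≤ (1-ε*m) * (1-ε*m)^k := this
        _ = (1-ε*m)^(k+1) := by ring
    have hpow1 : (0:ℝ) ≤ (1 - ε*m)^(k+1) := pow_nonneg hc0 (k+1)
    constructor
    · intro i
      have h := fseq_step_le hS (n := 2*k+2) heven i
      have heq : fseq S (2*(k+1)+1) = fseq S (2*k+2+1) := by ring_nf
      rw [heq]
      calc fseq S (2*k+2+1) i ≤ (∑ j, S i j) * (1-ε*m)^(k+1) := h
        _ ≤ 1 * (1-ε*m)^(k+1) := mul_le_mul_of_nonneg_right (hrowS i) hpow1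
        _ = (1-ε*m)^(k+1) := one_mul _
    · have h := fseq_step_le hS (n := 2*k+2) heven i₀
      have heq : fseq S (2*(k+1)+1) = fseq S (2*k+2+1) := by ring_nf
      rw [heq]
      calc fseq S (2*k+2+1) i₀ ≤ (∑ j, S i₀ j) * (1-ε*m)^(k+1) := h
        _ ≤ (1-ε) * (1-ε*m)^(k+1) := mul_le_mul_of_nonneg_right hi₀ hpow1

/-! ### Sums over words -/

lemma sum_fn_succ {N n : ℕ} (g : (Fin (n+1) → Fin N) → ℝ) :
    ∑ v : Fin (n+1) → Fin N, g v = ∑ j : Fin N, ∑ w : Fin n → Fin N, g (Fin.cons j w) := by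
  rw [← (Fin.consEquiv (fun _ : Fin (n+1) => Fin N)).sum_comp g]
  rw [Fintype.sum_prod_type]
  rfl

lemma sum_sqrt_chain {N : ℕ} {T T' : Fin N → Fin N → ℝ}
    (hT : ∀ i j, 0 ≤ T i j) (hT' : ∀ i j, 0 ≤ T' i j) :
    ∀ (n : ℕ) (i : Fin N),
      ∑ v : Fin n → Fin N,
        Real.sqrt (chainProd T i (List.ofFn v) * chainProd T' i (List.ofFn v))
      = fseq (fun i j => Real.sqrt (T i j * T' i j)) n i := by
  intro n
  induction n with
  | zero =>
    intro i
    simp [chainProd, fseq, List.ofFn_zero]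
  | succ n ih =>
    intro i
    rw [sum_fn_succ]
    show _ = ∑ j, Real.sqrt (T i j * T' i j) * fseq _ n j
    apply Finset.sum_congr rfl
    intro j _
    rw [← ih j, Finset.mul_sum]
    apply Finset.sum_congr rfl
    intro w _
    have hofn : List.ofFn (Fin.cons j w : Fin (n+1) → Fin N) = j :: List.ofFn w := by
      simp [List.ofFn_succ]
    rw [hofn]
    have e1 : chainProd T i (j :: List.ofFn w) = T i j * chainProd T j (List.ofFn w) := rfl
    have e1' : chainProd T' i (j :: List.ofFn w) = T' i j * chainProd T' j (List.ofFn w) := rfl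
    rw [e1, e1', show T i j * chainProd T j (List.ofFn w) * (T' i j * chainProd T' j (List.ofFn w))
        = (T i j * T' i j) * (chainProd T j (List.ofFn w) * chainProd T' j (List.ofFn w)) by ring,
      Real.sqrt_mul (mul_nonneg (hT i j) (hT' i j))]

lemma sum_sqrt_markov {N : ℕ} {lam lam' : Fin N → ℝ} {T T' : Fin N → Fin N → ℝ}
    (hlam : ∀ i, 0 ≤ lam i) (hlam' : ∀ i, 0 ≤ lam' i)
    (hT : ∀ i j, 0 ≤ T i j) (hT' : ∀ i j, 0 ≤ T' i j) (n : ℕ) :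
    ∑ v : Fin (n+1) → Fin N,
      Real.sqrt (markovCyl lam T (List.ofFn v) * markovCyl lam' T' (List.ofFn v))
    = ∑ i, Real.sqrt (lam i * lam' i) * fseq (fun i j => Real.sqrt (T i j * T' i j)) n i := by
  rw [sum_fn_succ]
  apply Finset.sum_congr rfl
  intro i _
  rw [← sum_sqrt_chain hT hT' n i, Finset.mul_sum]
  apply Finset.sum_congr rfl
  intro w _
  have hofn : List.ofFn (Fin.cons i w : Fin (n+1) → Fin N) = i :: List.ofFn w := by
    simp [List.ofFn_succ]
  rw [hofn]
  have e1 : markovCyl lam T (i :: List.ofFn w) = lam i * chainProd T i (List.ofFn w) := rfl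
  have e1' : markovCyl lam' T' (i :: List.ofFn w) = lam' i * chainProd T' i (List.ofFn w) := rfl
  rw [e1, e1', show lam i * chainProd T i (List.ofFn w) * (lam' i * chainProd T' i (List.ofFn w))
      = (lam i * lam' i) * (chainProd T i (List.ofFn w) * chainProd T' i (List.ofFn w)) by ring,
    Real.sqrt_mul (mul_nonneg (hlam i) (hlam' i))]

/-! ### Cylinder set lemmas -/

lemma measurableSet_cyl {N : ℕ} (w : List (Fin N)) : MeasurableSet (cyl w) := by
  have : cyl w = ⋂ k : Fin w.length, (fun ω : Word N => ω k) ⁻¹' {w.get k} := by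
    ext ω; simp [cyl, Set.mem_iInter]
  rw [this]
  exact MeasurableSet.iInter fun k =>
    (measurable_pi_apply (k : ℕ)) (MeasurableSet.singleton _)

lemma mem_cyl_ofFn {N n : ℕ} (v : Fin n → Fin N) (ω : Word N) :
    ω ∈ cyl (List.ofFn v) ↔ ∀ k : Fin n, ω k = v k := by
  constructor
  · intro h k
    have := h (Fin.cast (List.length_ofFn (f := v)).symm k)
    rwa [List.get_ofFn, Fin.cast_cast, Fin.cast_eq_self] at this
  · intro h k
    rw [List.get_ofFn]
    have : ((Fin.cast (by simp) k : Fin n) : ℕ) = (k : ℕ) := rfl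
    rw [← this]
    exact h _

lemma cyl_disjoint {N n : ℕ} {v v' : Fin n → Fin N} (h : v ≠ v') :
    Disjoint (cyl (List.ofFn v)) (cyl (List.ofFn v')) := by
  rw [Set.disjoint_left]
  intro ω h1 h2
  apply h
  funext k
  rw [← (mem_cyl_ofFn v ω).1 h1 k, ← (mem_cyl_ofFn v' ω).1 h2 k]

lemma compl_biUnion_cyl {N n : ℕ} (V : Finset (Fin n → Fin N)) :
    (⋃ v ∈ V, cyl (List.ofFn v))ᶜ = ⋃ v ∈ Vᶜ, cyl (List.ofFn v) := by
  ext ω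
  set v₀ : Fin n → Fin N := fun k => ω k with hv₀
  have hmem : ω ∈ cyl (List.ofFn v₀) := (mem_cyl_ofFn _ ω).2 fun k => rfl
  have huniq : ∀ v : Fin n → Fin N, ω ∈ cyl (List.ofFn v) → v = v₀ := by
    intro v hv
    funext k
    rw [← (mem_cyl_ofFn v ω).1 hv k]
  simp only [Set.mem_compl_iff, Set.mem_iUnion, Finset.mem_compl, exists_prop]
  constructor
  · intro h
    refine ⟨v₀, ?_, hmem⟩
    intro hv₀V
    exact h ⟨v₀, hv₀V, hmem⟩
  · rintro ⟨v, hvV, hv⟩ ⟨v', hv'V, hv'⟩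
    rw [huniq v hv] at hvV
    rw [huniq v' hv'] at hv'V
    exact hvV hv'V

lemma measure_biUnion_cyl {N n : ℕ} (μ : Measure (Word N)) (V : Finset (Fin n → Fin N)) :
    μ (⋃ v ∈ V, cyl (List.ofFn v)) = ∑ v ∈ V, μ (cyl (List.ofFn v)) := by
  apply measure_biUnion_finset
  · intro v _ v' _ hne
    exact cyl_disjoint hne
  · intro v _
    exact measurableSet_cyl _

lemma markovCyl_nonneg {N : ℕ} {lam : Fin N → ℝ} {T : Fin N → Fin N → ℝ}
    (hlam : ∀ i, 0 ≤ lam i) (hT : ∀ i j, 0 ≤ T i j) (w : List (Fin N)) :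
    0 ≤ markovCyl lam T w := by
  cases w with
  | nil => norm_num [markovCyl]
  | cons i rest => exact mul_nonneg (hlam i) (chainProd_nonneg hT rest i)

theorem markov_measures_mutuallySingular {N : ℕ} (hN : 2 ≤ N)
    (lam lam' : Fin N → ℝ) (T T' : Fin N → Fin N → ℝ)
    (hlam_pos : ∀ i, 0 < lam i) (hlam_pos' : ∀ i, 0 < lam' i)
    (hT_pos : ∀ i j, 0 < T i j) (hT_pos' : ∀ i j, 0 < T' i j)
    (hrow : ∀ i, ∑ j, T i j = 1) (hrow' : ∀ i, ∑ j, T' i j = 1)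
    (hstat : ∀ j, ∑ i, lam i * T i j = lam j)
    (hstat' : ∀ j, ∑ i, lam' i * T' i j = lam' j)
    (hne : T ≠ T')
    (μ μ' : Measure (Word N)) [IsProbabilityMeasure μ] [IsProbabilityMeasure μ']
    (hμ : ∀ w : List (Fin N), μ (cyl w) = ENNReal.ofReal (markovCyl lam T w))
    (hμ' : ∀ w : List (Fin N), μ' (cyl w) = ENNReal.ofReal (markovCyl lam' T' w)) :
    μ ⟂ₘ μ' := by
  have hNpos : 0 < N := by omega
  have : NeZero N := ⟨by omega⟩
  set S : Fin N → Fin N → ℝ := fun i j => Real.sqrt (T i j * T' i j) with hSdef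
  have hS : ∀ i j, 0 ≤ S i j := fun i j => Real.sqrt_nonneg _
  have hSpos : ∀ i j, 0 < S i j := fun i j =>
    Real.sqrt_pos.2 (mul_pos (hT_pos i j) (hT_pos' i j))
  have hrowS : ∀ i, ∑ j, S i j ≤ 1 := by
    intro i
    calc ∑ j, S i j ≤ ∑ j, (T i j + T' i j) / 2 :=
          Finset.sum_le_sum fun j _ =>
            sqrt_mul_le_half _ _ (hT_pos i j).le (hT_pos' i j).le
      _ = 1 := by
          rw [show (∑ j, (T i j + T' i j) / 2) = ((∑ j, T i j) + (∑ j, T' i j)) / 2 by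
            rw [← Finset.sum_add_distrib, Finset.sum_div]]
          rw [hrow i, hrow' i]; norm_num
  obtain ⟨i₀, j₀, hij⟩ : ∃ i j, T i j ≠ T' i j := by
    by_contra h
    push_neg at h
    exact hne (funext fun i => funext fun j => h i j)
  have hrowSlt : ∑ j, S i₀ j < 1 := by
    calc ∑ j, S i₀ j < ∑ j, (T i₀ j + T' i₀ j) / 2 := by
          apply Finset.sum_lt_sum
            (fun j _ => sqrt_mul_le_half _ _ (hT_pos i₀ j).le (hT_pos' i₀ j).le)
          exact ⟨j₀, Finset.mem_univ j₀,
            sqrt_mul_lt_half _ _ (hT_pos i₀ j₀).le (hT_pos' i₀ j₀).le hij⟩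
      _ = 1 := by
          rw [show (∑ j, (T i₀ j + T' i₀ j) / 2) = ((∑ j, T i₀ j) + (∑ j, T' i₀ j)) / 2 by
            rw [← Finset.sum_add_distrib, Finset.sum_div]]
          rw [hrow i₀, hrow' i₀]; norm_num
  set ε : ℝ := 1 - ∑ j, S i₀ j with hεdef
  have hε : 0 < ε := by simp only [hεdef]; linarith
  have hi₀ : ∑ j, S i₀ j ≤ 1 - ε := by simp [hεdef]
  set m : ℝ := Finset.univ.inf' (Finset.univ_nonempty) (fun j => S j i₀) with hmdef
  have hm : 0 < m := by
    rw [hmdef, Finset.lt_inf'_iff]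
    exact fun j _ => hSpos j i₀
  have hmS : ∀ j, m ≤ S j i₀ := fun j => Finset.inf'_le _ (Finset.mem_univ j)
  set c : ℝ := 1 - ε * m with hcdef
  have hdecay := fseq_decay hS hrowS hε hm hi₀ hmS
  have hc0 : 0 ≤ c := by
    have hε1 : ε ≤ 1 := by
      have : (0:ℝ) ≤ ∑ j, S i₀ j := Finset.sum_nonneg fun j _ => hS i₀ j
      simp only [hεdef]; linarith
    have hm1 : m ≤ 1 := by
      have h1 : m ≤ S i₀ i₀ := hmS i₀
      have h2 : S i₀ i₀ ≤ ∑ j, S i₀ j :=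
        Finset.single_le_sum (fun j _ => hS i₀ j) (Finset.mem_univ i₀)
      linarith
    simp only [hcdef]; nlinarith
  have hc1 : c < 1 := by simp only [hcdef]; nlinarith
  set L : ℝ := ∑ i, Real.sqrt (lam i * lam' i) with hLdef
  have hL0 : 0 ≤ L := Finset.sum_nonneg fun i _ => Real.sqrt_nonneg _
  -- the Hellinger bound: sum over words of length 2k+2 of sqrt(p q) ≤ L * c ^ k
  have hH : ∀ k : ℕ, ∑ v : Fin (2*k+2) → Fin N,
      Real.sqrt (markovCyl lam T (List.ofFn v) * markovCyl lam' T' (List.ofFn v))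
      ≤ L * c ^ k := by
    intro k
    have heq : (2*k+2) = (2*k+1) + 1 := by ring
    rw [show (∑ v : Fin (2*k+2) → Fin N,
        Real.sqrt (markovCyl lam T (List.ofFn v) * markovCyl lam' T' (List.ofFn v)))
        = ∑ v : Fin ((2*k+1)+1) → Fin N,
        Real.sqrt (markovCyl lam T (List.ofFn v) * markovCyl lam' T' (List.ofFn v)) by
        congr 1]
    rw [sum_sqrt_markov (fun i => (hlam_pos i).le) (fun i => (hlam_pos' i).le)
      (fun i j => (hT_pos i j).le) (fun i j => (hT_pos' i j).le) (2*k+1)]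
    calc ∑ i, Real.sqrt (lam i * lam' i) * fseq S (2*k+1) i
        ≤ ∑ i, Real.sqrt (lam i * lam' i) * c ^ k :=
          Finset.sum_le_sum fun i _ =>
            mul_le_mul_of_nonneg_left ((hdecay k).1 i) (Real.sqrt_nonneg _)
      _ = L * c ^ k := by rw [← Finset.sum_mul]
  -- define the bad sets
  set p : (k : ℕ) → (Fin (2*k+2) → Fin N) → ℝ :=
    fun k v => markovCyl lam T (List.ofFn v) with hpdef
  set q : (k : ℕ) → (Fin (2*k+2) → Fin N) → ℝ :=
    fun k v => markovCyl lam' T' (List.ofFn v) with hqdef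
  have hp0 : ∀ k v, 0 ≤ p k v := fun k v =>
    markovCyl_nonneg (fun i => (hlam_pos i).le) (fun i j => (hT_pos i j).le) _
  have hq0 : ∀ k v, 0 ≤ q k v := fun k v =>
    markovCyl_nonneg (fun i => (hlam_pos' i).le) (fun i j => (hT_pos' i j).le) _
  set W : (k : ℕ) → Finset (Fin (2*k+2) → Fin N) :=
    fun k => Finset.univ.filter (fun v => p k v ≤ q k v) with hWdef
  set A : ℕ → Set (Word N) := fun k => ⋃ v ∈ W k, cyl (List.ofFn v) with hAdef
  have hAmeas : ∀ k, MeasurableSet (A k) := by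
    intro k
    exact (W k).measurableSet_biUnion fun v _ => measurableSet_cyl _
  have hμA : ∀ k, μ (A k) ≤ ENNReal.ofReal (L * c ^ k) := by
    intro k
    rw [hAdef]
    rw [measure_biUnion_cyl μ (W k)]
    have : ∑ v ∈ W k, μ (cyl (List.ofFn v)) = ENNReal.ofReal (∑ v ∈ W k, p k v) := by
      rw [ENNReal.ofReal_sum_of_nonneg fun v _ => hp0 k v]
      exact Finset.sum_congr rfl fun v _ => hμ _
    rw [this]
    apply ENNReal.ofReal_le_ofReal
    calc ∑ v ∈ W k, p k v ≤ ∑ v ∈ W k, Real.sqrt (p k v * q k v) := by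
          apply Finset.sum_le_sum
          intro v hv
          have hle : p k v ≤ q k v := (Finset.mem_filter.1 hv).2
          calc p k v = Real.sqrt (p k v * p k v) := (Real.sqrt_mul_self (hp0 k v)).symm
            _ ≤ Real.sqrt (p k v * q k v) :=
              Real.sqrt_le_sqrt (mul_le_mul_of_nonneg_left hle (hp0 k v))
      _ ≤ ∑ v : Fin (2*k+2) → Fin N, Real.sqrt (p k v * q k v) :=
          Finset.sum_le_sum_of_subset_of_nonneg (Finset.subset_univ _)
            (fun v _ _ => Real.sqrt_nonneg _)
      _ ≤ L * c ^ k := hH k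
  have hμ'Ac : ∀ k, μ' (A k)ᶜ ≤ ENNReal.ofReal (L * c ^ k) := by
    intro k
    rw [hAdef]
    rw [compl_biUnion_cyl (W k), measure_biUnion_cyl μ' (W k)ᶜ]
    have : ∑ v ∈ (W k)ᶜ, μ' (cyl (List.ofFn v)) = ENNReal.ofReal (∑ v ∈ (W k)ᶜ, q k v) := by
      rw [ENNReal.ofReal_sum_of_nonneg fun v _ => hq0 k v]
      exact Finset.sum_congr rfl fun v _ => hμ' _
    rw [this]
    apply ENNReal.ofReal_le_ofReal
    calc ∑ v ∈ (W k)ᶜ, q k v ≤ ∑ v ∈ (W k)ᶜ, Real.sqrt (p k v * q k v) := by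
          apply Finset.sum_le_sum
          intro v hv
          have hle : q k v ≤ p k v := by
            have := Finset.mem_compl.1 hv
            rw [hWdef, Finset.mem_filter] at this
            push_neg at this
            exact (this (Finset.mem_univ v)).le
          calc q k v = Real.sqrt (q k v * q k v) := (Real.sqrt_mul_self (hq0 k v)).symm
            _ ≤ Real.sqrt (p k v * q k v) :=
              Real.sqrt_le_sqrt (mul_le_mul_of_nonneg_right hle (hq0 k v))
      _ ≤ ∑ v : Fin (2*k+2) → Fin N, Real.sqrt (p k v * q k v) :=
          Finset.sum_le_sum_of_subset_of_nonneg (Finset.subset_univ _)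
            (fun v _ _ => Real.sqrt_nonneg _)
      _ ≤ L * c ^ k := hH k
  -- the singular set
  set Aset : Set (Word N) := ⋂ n : ℕ, ⋃ k : ℕ, ⋃ (_ : n ≤ k), A k with hAsetdef
  have hAsetmeas : MeasurableSet Aset :=
    MeasurableSet.iInter fun n => MeasurableSet.iUnion fun k =>
      MeasurableSet.iUnion fun _ => hAmeas k
  have hofc1 : ENNReal.ofReal c < 1 := by
    rw [← ENNReal.ofReal_one]
    exact ENNReal.ofReal_lt_ofReal_iff_of_nonneg hc0 |>.2 hc1
  have htendsto : Filter.Tendsto (fun k : ℕ => ENNReal.ofReal (L * c ^ k))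
      Filter.atTop (nhds 0) := by
    rw [show (0 : ℝ≥0∞) = ENNReal.ofReal 0 by simp]
    apply ENNReal.tendsto_ofReal
    rw [show (0:ℝ) = L * 0 by ring]
    exact (tendsto_pow_atTop_nhds_zero_of_lt_one hc0 hc1).const_mul L
  refine ⟨Aset, hAsetmeas, ?_, ?_⟩
  · -- μ Aset = 0
    have hbound : ∀ n : ℕ, μ Aset ≤ ENNReal.ofReal (L * c ^ n) * (1 - ENNReal.ofReal c)⁻¹ := by
      intro n
      have hsub : Aset ⊆ ⋃ j : ℕ, A (n + j) := by
        intro ω hω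
        have := Set.mem_iInter.1 hω n
        simp only [Set.mem_iUnion] at this ⊢
        obtain ⟨k, hk, hωk⟩ := this
        exact ⟨k - n, by rwa [Nat.add_sub_cancel' hk]⟩
      calc μ Aset ≤ μ (⋃ j : ℕ, A (n + j)) := measure_mono hsub
        _ ≤ ∑' j : ℕ, μ (A (n + j)) := measure_iUnion_le _
        _ ≤ ∑' j : ℕ, ENNReal.ofReal (L * c ^ n) * (ENNReal.ofReal c) ^ j := by
            apply ENNReal.tsum_le_tsum
            intro j
            refine (hμA (n + j)).trans ?_
            rw [← ENNReal.ofReal_pow hc0, ← ENNReal.ofReal_mul (by positivity)]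
            apply ENNReal.ofReal_le_ofReal
            rw [pow_add, ← mul_assoc]
        _ = ENNReal.ofReal (L * c ^ n) * (1 - ENNReal.ofReal c)⁻¹ := by
            rw [ENNReal.tsum_mul_left, ENNReal.tsum_geometric]
    have hKlt : (1 - ENNReal.ofReal c)⁻¹ ≠ ⊤ := by
      rw [Ne, ENNReal.inv_eq_top, tsub_eq_zero_iff_le]
      exact fun h => absurd h (not_le.2 hofc1)
    have h0 : Filter.Tendsto (fun n : ℕ =>
        ENNReal.ofReal (L * c ^ n) * (1 - ENNReal.ofReal c)⁻¹) Filter.atTop (nhds 0) := by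
      rw [show (0:ℝ≥0∞) = 0 * (1 - ENNReal.ofReal c)⁻¹ by simp]
      exact ENNReal.Tendsto.mul_const htendsto (Or.inr hKlt)
    have := ge_of_tendsto h0 (Filter.Eventually.of_forall hbound)
    exact le_antisymm this (zero_le ..)
  · -- μ' Asetᶜ = 0
    rw [hAsetdef, Set.compl_iInter]
    apply measure_iUnion_null
    intro n
    rw [Set.compl_iUnion]
    have hbound : ∀ k, n ≤ k → μ' (⋂ k' : ℕ, (⋃ (_ : n ≤ k'), A k')ᶜ)
        ≤ ENNReal.ofReal (L * c ^ k) := by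
      intro k hk
      refine le_trans (measure_mono ?_) (hμ'Ac k)
      intro ω hω
      have := Set.mem_iInter.1 hω k
      rw [Set.compl_iUnion] at this
      exact Set.mem_iInter.1 this hk
    have := ge_of_tendsto htendsto (Filter.eventually_atTop.2 ⟨n, hbound⟩)
    exact le_antisymm this (zero_le ..)
end
end

section
/- The one-sided shift σ on (Z_N)^ℕ is ergodic with respect to any Markov measure μ determined by a strictly positive stochastic matrix T and strictly positive stationary vector λ. -/
open MeasureTheory ENNReal

noncomputable section

open scoped symmDiff

namespace MarkovErgodic

variable {N : ℕ}

lemma mem_cyl {w : List (Fin N)} {ω : Word N} :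
    ω ∈ cyl w ↔ ∀ k (h : k < w.length), ω k = w.get ⟨k, h⟩ := by
  constructor
  · intro hω k h; exact hω ⟨k, h⟩
  · intro h k; exact h k k.isLt

lemma cyl_nil : cyl ([] : List (Fin N)) = Set.univ := by
  ext ω; simp [mem_cyl]

lemma mem_cyl_ofFn {n : ℕ} {f : Fin n → Fin N} {ω : Word N} :
    ω ∈ cyl (List.ofFn f) ↔ ∀ k : Fin n, ω k = f k := by
  rw [mem_cyl]
  constructor
  · intro h k
    have := h k (by simp [k.isLt])
    simpa [List.get_ofFn] using this
  · intro h k hk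
    have hk' : k < n := by simpa using hk
    have := h ⟨k, hk'⟩
    simpa [List.get_ofFn] using this

lemma shift_iter (n : ℕ) (ω : Word N) : shift^[n] ω = fun k => ω (k + n) := by
  induction n with
  | zero => simp
  | succ m ih =>
    rw [Function.iterate_succ_apply', ih]
    funext k
    simp only [shift]
    ring_nf

lemma cyl_append (v u : List (Fin N)) :
    cyl (v ++ u) = cyl v ∩ shift^[v.length] ⁻¹' cyl u := by
  ext ω
  simp only [Set.mem_inter_iff, Set.mem_preimage, mem_cyl, shift_iter]
  constructor
  · intro h
    refine ⟨fun k hk => ?_, fun k hk => ?_⟩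
    · have := h k (by simp; omega)
      simp only [List.get_eq_getElem] at this ⊢
      rwa [List.getElem_append_left hk] at this
    · have := h (v.length + k) (by simp; omega)
      rw [show ω (v.length + k) = ω (k + v.length) by ring_nf] at this
      rw [this]
      simp only [List.get_eq_getElem]
      rw [List.getElem_append_right (by omega)]
      congr 1
      omega
  · intro ⟨h1, h2⟩ k hk
    rcases lt_or_ge k v.length with h | h
    · simp only [List.get_eq_getElem]; rw [List.getElem_append_left h]; exact h1 k h
    · have := h2 (k - v.length) (by simp at hk ⊢; omega)
      rw [show k - v.length + v.length = k by omega] at this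
      rw [this]
      simp only [List.get_eq_getElem]
      rw [List.getElem_append_right (by omega)]


lemma cyl_cons (i : Fin N) (w : List (Fin N)) :
    cyl (i :: w) = {ω : Word N | ω 0 = i} ∩ shift ⁻¹' cyl w := by
  have := cyl_append [i] w
  simp only [List.singleton_append, List.length_singleton] at this
  rw [this]
  congr 1
  · ext ω; simp [mem_cyl]

lemma disjoint_cyl_ofFn {n : ℕ} {f g : Fin n → Fin N} (hfg : f ≠ g) :
    Disjoint (cyl (List.ofFn f)) (cyl (List.ofFn g)) := by
  rw [Set.disjoint_left]
  intro ω hf hg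
  apply hfg
  funext k
  rw [← mem_cyl_ofFn.1 hf k, ← mem_cyl_ofFn.1 hg k]

lemma iUnion_cyl_ofFn (n : ℕ) :
    ⋃ f : Fin n → Fin N, cyl (List.ofFn f) = Set.univ := by
  ext ω
  simp only [Set.mem_iUnion, Set.mem_univ, iff_true]
  exact ⟨fun k => ω k, mem_cyl_ofFn.2 fun k => rfl⟩

lemma measurableSet_cyl (w : List (Fin N)) : MeasurableSet (cyl w) := by
  have : cyl w = ⋂ k : Fin w.length, (fun ω : Word N => ω k) ⁻¹' {w.get k} := by
    ext ω; simp [mem_cyl, Set.mem_iInter]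
    exact ⟨fun h k => h k k.isLt, fun h k hk => h ⟨k, hk⟩⟩
  rw [this]
  exact MeasurableSet.iInter fun k => (measurable_pi_apply _) (measurableSet_singleton _)

lemma measurable_shift : Measurable (shift : Word N → Word N) :=
  measurable_pi_lambda _ fun n => measurable_pi_apply (n + 1)

/-- The collection of all cylinder sets. -/
def cylSystem (N : ℕ) : Set (Set (Word N)) := {s | ∃ w : List (Fin N), s = cyl w}

lemma isPiSystem_cylSystem : IsPiSystem (cylSystem N) := by
  rintro s ⟨w, rfl⟩ t ⟨v, rfl⟩ hne
  obtain ⟨ω, hw, hv⟩ := hne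
  rcases le_total w.length v.length with h | h
  · refine ⟨v, ?_⟩
    rw [Set.inter_eq_right]
    intro ω' hv'
    rw [mem_cyl] at hv hv' hw ⊢
    intro k hk
    rw [← hw k hk, hv k (lt_of_lt_of_le hk h), hv' k (lt_of_lt_of_le hk h)]
  · refine ⟨w, ?_⟩
    rw [Set.inter_eq_left]
    intro ω' hw'
    rw [mem_cyl] at hv hw' hw ⊢
    intro k hk
    rw [← hv k hk, hw k (lt_of_lt_of_le hk h), hw' k (lt_of_lt_of_le hk h)]

lemma eval_singleton_eq_iUnion (n : ℕ) (i : Fin N) :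
    {ω : Word N | ω n = i} =
      ⋃ (f : Fin (n+1) → Fin N) (_ : f (Fin.last n) = i), cyl (List.ofFn f) := by
  ext ω
  simp only [Set.mem_setOf_eq, Set.mem_iUnion]
  constructor
  · intro h
    refine ⟨fun k => ω k, by simpa using h, mem_cyl_ofFn.2 fun k => rfl⟩
  · rintro ⟨f, hf, hω⟩
    have := mem_cyl_ofFn.1 hω (Fin.last n)
    simpa [hf] using this

lemma generateFrom_cylSystem :
    MeasurableSpace.generateFrom (cylSystem N) = (inferInstance : MeasurableSpace (Word N)) := by
  apply le_antisymm
  · rw [MeasurableSpace.generateFrom_le_iff]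
    rintro s ⟨w, rfl⟩
    exact measurableSet_cyl w
  · rw [show (inferInstance : MeasurableSpace (Word N)) = MeasurableSpace.pi from rfl,
      MeasurableSpace.pi]
    apply iSup_le
    intro n
    rw [MeasurableSpace.comap_le_iff_le_map]
    intro s _
    rw [MeasurableSpace.map_def]
    have : (fun ω : Word N => ω n) ⁻¹' s = ⋃ i ∈ s, {ω : Word N | ω n = i} := by
      ext ω; simp
    rw [this]
    apply MeasurableSet.biUnion s.to_countable
    intro i _
    rw [eval_singleton_eq_iUnion]
    apply MeasurableSet.iUnion
    intro f
    apply MeasurableSet.iUnion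
    intro _
    exact MeasurableSpace.measurableSet_generateFrom ⟨_, rfl⟩


/-- Finite unions of level-`n` cylinders. -/
def cylSet (N : ℕ) (n : ℕ) (S : Finset (Fin n → Fin N)) : Set (Word N) :=
  ⋃ f ∈ S, cyl (List.ofFn f)

lemma mem_cylSet {n : ℕ} {S : Finset (Fin n → Fin N)} {ω : Word N} :
    ω ∈ cylSet N n S ↔ (fun k : Fin n => ω k) ∈ S := by
  simp only [cylSet, Set.mem_iUnion]
  constructor
  · rintro ⟨f, hf, hω⟩
    have : (fun k : Fin n => ω k) = f := funext fun k => mem_cyl_ofFn.1 hω k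
    rwa [this]
  · intro h
    exact ⟨_, h, mem_cyl_ofFn.2 fun k => rfl⟩

lemma cylSet_refine {n m : ℕ} (h : n ≤ m) (S : Finset (Fin n → Fin N)) :
    cylSet N n S = cylSet N m
      (Finset.univ.filter fun g : Fin m → Fin N => (fun k => g (Fin.castLE h k)) ∈ S) := by
  ext ω
  simp only [mem_cylSet, Finset.mem_filter, Finset.mem_univ, true_and, Fin.coe_castLE]

/-- The algebra of finite-dimensional sets. -/
def cylAlgebra (N : ℕ) : Set (Set (Word N)) :=
  {B | ∃ (n : ℕ) (S : Finset (Fin n → Fin N)), B = cylSet N n S}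

lemma measurableSet_cylSet {n : ℕ} (S : Finset (Fin n → Fin N)) :
    MeasurableSet (cylSet N n S) :=
  MeasurableSet.biUnion S.countable_toSet fun f _ => measurableSet_cyl _

lemma isSetAlgebra_cylAlgebra : IsSetAlgebra (cylAlgebra N) := by
  constructor
  · exact ⟨0, ∅, by simp [cylSet]⟩
  · rintro s ⟨n, S, rfl⟩
    refine ⟨n, Sᶜ, ?_⟩
    ext ω
    simp [mem_cylSet]
  · rintro s t ⟨n, S, rfl⟩ ⟨m, S', rfl⟩
    refine ⟨max n m, ?_, ?_⟩
    · exact (Finset.univ.filter fun g : Fin (max n m) → Fin N =>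
        (fun k => g (Fin.castLE (le_max_left n m) k)) ∈ S) ∪
        (Finset.univ.filter fun g => (fun k => g (Fin.castLE (le_max_right n m) k)) ∈ S')
    · rw [cylSet_refine (le_max_left n m) S, cylSet_refine (le_max_right n m) S']
      ext ω
      simp [mem_cylSet]

lemma generateFrom_cylAlgebra :
    (inferInstance : MeasurableSpace (Word N)) =
      MeasurableSpace.generateFrom (cylAlgebra N) := by
  apply le_antisymm
  · rw [← generateFrom_cylSystem, MeasurableSpace.generateFrom_le_iff]
    rintro s ⟨w, rfl⟩
    have : cyl w = cylSet N w.length {fun k => w.get k} := by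
      ext ω
      simp only [mem_cylSet, Finset.mem_singleton]
      rw [mem_cyl]
      constructor
      · intro h; funext k; exact h k k.isLt
      · intro h k hk; exact congrFun h ⟨k, hk⟩
    rw [this]
    exact MeasurableSpace.measurableSet_generateFrom ⟨_, _, rfl⟩
  · rw [MeasurableSpace.generateFrom_le_iff]
    rintro s ⟨n, S, rfl⟩
    exact measurableSet_cylSet S


section MeasureFacts

variable {lam : Fin N → ℝ} {T : Fin N → Fin N → ℝ}
  {μ : Measure (Word N)}

lemma chainProd_pos (hT_pos : ∀ i j, 0 < T i j) (i : Fin N) (w : List (Fin N)) :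
    0 < chainProd T i w := by
  induction w generalizing i with
  | nil => simp [chainProd]
  | cons j rest ih => exact mul_pos (hT_pos i j) (ih j)

lemma markovCyl_pos (hlam_pos : ∀ i, 0 < lam i) (hT_pos : ∀ i j, 0 < T i j)
    (w : List (Fin N)) : 0 < markovCyl lam T w := by
  cases w with
  | nil => simp [markovCyl]
  | cons i rest => exact mul_pos (hlam_pos _) (chainProd_pos hT_pos _ _)

lemma measure_cylSet [IsProbabilityMeasure μ]
    (hμ : ∀ w : List (Fin N), μ (cyl w) = ENNReal.ofReal (markovCyl lam T w))
    {n : ℕ} (S : Finset (Fin n → Fin N)) :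
    μ (cylSet N n S) = ∑ f ∈ S, ENNReal.ofReal (markovCyl lam T (List.ofFn f)) := by
  rw [cylSet, measure_biUnion_finset ?_ fun f _ => measurableSet_cyl _]
  · exact Finset.sum_congr rfl fun f _ => hμ _
  · intro f _ g _ hfg
    exact disjoint_cyl_ofFn hfg

lemma lam_sum (hlam_pos : ∀ i, 0 < lam i)
    [IsProbabilityMeasure μ]
    (hμ : ∀ w : List (Fin N), μ (cyl w) = ENNReal.ofReal (markovCyl lam T w)) :
    ∑ i, lam i = 1 := by
  have h0 : cylSet N 1 Finset.univ = Set.univ := by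
    ext ω; simp [mem_cylSet]
  have h1 : (1 : ℝ≥0∞) = ∑ f : Fin 1 → Fin N, ENNReal.ofReal (markovCyl lam T (List.ofFn f)) := by
    rw [← measure_cylSet hμ Finset.univ, h0, measure_univ]
  have h2 : ∀ f : Fin 1 → Fin N, markovCyl lam T (List.ofFn f) = lam (f 0) := by
    intro f
    simp [List.ofFn_succ, markovCyl, chainProd]
  rw [show (∑ f : Fin 1 → Fin N, ENNReal.ofReal (markovCyl lam T (List.ofFn f)))
      = ∑ f : Fin 1 → Fin N, ENNReal.ofReal (lam (f 0)) from
      Finset.sum_congr rfl fun f _ => by rw [h2]] at h1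
  have h3 : (∑ f : Fin 1 → Fin N, ENNReal.ofReal (lam (f 0)))
      = ∑ i, ENNReal.ofReal (lam i) :=
    Fintype.sum_equiv (Equiv.funUnique (Fin 1) (Fin N)) _ _ (fun f => rfl)
  rw [h3, ← ENNReal.ofReal_sum_of_nonneg (fun i _ => (hlam_pos i).le)] at h1
  have h4 : (0:ℝ) ≤ ∑ i, lam i := Finset.sum_nonneg fun i _ => (hlam_pos i).le
  have := ENNReal.ofReal_eq_one.mp h1.symm
  exact this

lemma lam_le_one (hlam_pos : ∀ i, 0 < lam i)
    [IsProbabilityMeasure μ]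
    (hμ : ∀ w : List (Fin N), μ (cyl w) = ENNReal.ofReal (markovCyl lam T w)) (i : Fin N) :
    lam i ≤ 1 := by
  rw [← lam_sum hlam_pos hμ]
  exact Finset.single_le_sum (fun j _ => (hlam_pos j).le) (Finset.mem_univ i)

lemma T_le_one (hT_pos : ∀ i j, 0 < T i j) (hrow : ∀ i, ∑ j, T i j = 1) (i j : Fin N) :
    T i j ≤ 1 := by
  rw [← hrow i]
  exact Finset.single_le_sum (fun k _ => (hT_pos i k).le) (Finset.mem_univ j)

lemma shift_preimage_cyl (w : List (Fin N)) :
    shift ⁻¹' cyl w = ⋃ i : Fin N, cyl (i :: w) := by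
  ext ω
  simp only [Set.mem_iUnion, cyl_cons, Set.mem_inter_iff, Set.mem_setOf_eq, Set.mem_preimage]
  constructor
  · intro h; exact ⟨ω 0, rfl, h⟩
  · rintro ⟨i, _, h⟩; exact h

lemma disjoint_cyl_cons {i j : Fin N} (hij : i ≠ j) (w v : List (Fin N)) :
    Disjoint (cyl (i :: w)) (cyl (j :: v)) := by
  rw [Set.disjoint_left]
  intro ω hi hj
  rw [cyl_cons] at hi hj
  exact hij (hi.1.symm.trans hj.1)

lemma markov_sum_cons (hlam_pos : ∀ i, 0 < lam i)
    (hstat : ∀ j, ∑ i, lam i * T i j = lam j)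
    (hlam_sum : ∑ i, lam i = 1) (w : List (Fin N)) :
    ∑ i, markovCyl lam T (i :: w) = markovCyl lam T w := by
  cases w with
  | nil => simpa [markovCyl, chainProd] using hlam_sum
  | cons j rest =>
    simp only [markovCyl, chainProd]
    simp only [← mul_assoc]
    rw [← Finset.sum_mul, hstat]

lemma shift_preserving (hlam_pos : ∀ i, 0 < lam i) (hT_pos : ∀ i j, 0 < T i j)
    (hstat : ∀ j, ∑ i, lam i * T i j = lam j)
    [IsProbabilityMeasure μ]
    (hμ : ∀ w : List (Fin N), μ (cyl w) = ENNReal.ofReal (markovCyl lam T w)) :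
    MeasurePreserving (shift : Word N → Word N) μ μ := by
  refine ⟨measurable_shift, ?_⟩
  have : IsProbabilityMeasure (μ.map shift) :=
    Measure.isProbabilityMeasure_map measurable_shift.aemeasurable
  apply ext_of_generate_finite (cylSystem N) generateFrom_cylSystem.symm isPiSystem_cylSystem
  · rintro s ⟨w, rfl⟩
    rw [Measure.map_apply measurable_shift (measurableSet_cyl w), shift_preimage_cyl,
      measure_iUnion (fun i j hij => disjoint_cyl_cons hij w w)
        (fun i => measurableSet_cyl _), tsum_fintype]
    have : ∀ i, μ (cyl (i :: w)) = ENNReal.ofReal (markovCyl lam T (i :: w)) := fun i => hμ _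
    rw [Finset.sum_congr rfl fun i _ => this i,
      ← ENNReal.ofReal_sum_of_nonneg
        (fun i _ => (markovCyl_pos hlam_pos hT_pos _).le),
      markov_sum_cons hlam_pos hstat (lam_sum hlam_pos hμ), hμ]
  · simp


/-- The last state of the chain `i :: l`. -/
def lastA : Fin N → List (Fin N) → Fin N
  | i, [] => i
  | _, j :: l => lastA j l

lemma chainProd_append (T : Fin N → Fin N → ℝ) (i : Fin N) (a b : List (Fin N)) :
    chainProd T i (a ++ b) = chainProd T i a * chainProd T (lastA i a) b := by
  induction a generalizing i with
  | nil => simp [chainProd, lastA]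
  | cons j l ih =>
    show T i j * chainProd T j (l ++ b) = T i j * chainProd T j l * chainProd T (lastA j l) b
    rw [ih j]; ring

lemma lastA_append_singleton (i : Fin N) (l : List (Fin N)) (x : Fin N) :
    lastA i (l ++ [x]) = x := by
  induction l generalizing i with
  | nil => rfl
  | cons j l ih => exact ih j

lemma pathSum_ge {T : Fin N → Fin N → ℝ} {c : ℝ} (hc : ∀ i j, c ≤ T i j)
    (hT_pos : ∀ i j, 0 < T i j) (hrow : ∀ i, ∑ j, T i j = 1) (r : ℕ) (b : Fin N) :
    ∀ a, c ≤ ∑ t : Fin r → Fin N, chainProd T a (List.ofFn t ++ [b]) := by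
  induction r with
  | zero =>
    intro a
    simp only [List.ofFn_zero, List.nil_append]
    rw [Fintype.sum_unique (fun _ : Fin 0 → Fin N => chainProd T a [b])]
    simp only [chainProd, mul_one]
    exact hc a b
  | succ r ih =>
    intro a
    rw [← Equiv.sum_comp (Fin.consEquiv fun _ : Fin (r+1) => Fin N)
      (fun t => chainProd T a (List.ofFn t ++ [b]))]
    rw [Fintype.sum_prod_type]
    have hterm : ∀ (j : Fin N) (t' : Fin r → Fin N),
        chainProd T a (List.ofFn (Fin.consEquiv (fun _ => Fin N) (j, t')) ++ [b])
          = T a j * chainProd T j (List.ofFn t' ++ [b]) := by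
      intro j t'
      have : List.ofFn (Fin.consEquiv (fun _ => Fin N) (j, t')) = j :: List.ofFn t' := by
        rw [List.ofFn_succ]
        simp [Fin.consEquiv]
      rw [this, List.cons_append, chainProd]
    calc c = c * ∑ j, T a j := by rw [hrow a]; ring
    _ ≤ ∑ j, T a j * ∑ t' : Fin r → Fin N, chainProd T j (List.ofFn t' ++ [b]) := by
        rw [Finset.mul_sum]
        apply Finset.sum_le_sum
        intro j _
        rw [mul_comm c (T a j)]
        exact mul_le_mul_of_nonneg_left (ih j) (hT_pos a j).le
    _ = ∑ j, ∑ t' : Fin r → Fin N,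
          chainProd T a (List.ofFn (Fin.consEquiv (fun _ => Fin N) (j, t')) ++ [b]) := by
        apply Finset.sum_congr rfl
        intro j _
        rw [Finset.mul_sum]
        exact Finset.sum_congr rfl fun t' _ => by rw [hterm]
    _ = _ := rfl

lemma markov_mix_real {lam : Fin N → ℝ} {T : Fin N → Fin N → ℝ} {c : ℝ}
    (hc : ∀ i j, c ≤ T i j) (hc_nonneg : 0 ≤ c)
    (hlam_pos : ∀ i, 0 < lam i) (hT_pos : ∀ i j, 0 < T i j)
    (hrow : ∀ i, ∑ j, T i j = 1) (hlam_le : ∀ i, lam i ≤ 1)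
    (u0 : Fin N) (u' : List (Fin N)) (v0 : Fin N) (v' : List (Fin N)) (r : ℕ) :
    c * markovCyl lam T (u0 :: u') * markovCyl lam T (v0 :: v')
      ≤ ∑ t : Fin r → Fin N,
          markovCyl lam T ((v0 :: v') ++ (List.ofFn t ++ (u0 :: u'))) := by
  have key : ∀ t : Fin r → Fin N,
      markovCyl lam T ((v0 :: v') ++ (List.ofFn t ++ (u0 :: u')))
        = markovCyl lam T (v0 :: v')
            * chainProd T (lastA v0 v') (List.ofFn t ++ [u0])
            * chainProd T u0 u' := by
    intro t
    show lam v0 * chainProd T v0 (v' ++ (List.ofFn t ++ (u0 :: u'))) = _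
    rw [chainProd_append, show List.ofFn t ++ (u0 :: u') = (List.ofFn t ++ [u0]) ++ u' by
      rw [List.append_assoc]; rfl,
      chainProd_append, lastA_append_singleton]
    show _ = lam v0 * chainProd T v0 v' * _ * _
    ring
  rw [Finset.sum_congr rfl fun t _ => key t]
  rw [← Finset.sum_mul, ← Finset.mul_sum]
  have h1 : c ≤ ∑ t : Fin r → Fin N, chainProd T (lastA v0 v') (List.ofFn t ++ [u0]) :=
    pathSum_ge hc hT_pos hrow r u0 _
  have hv : 0 < markovCyl lam T (v0 :: v') := markovCyl_pos hlam_pos hT_pos _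
  have hu' : 0 < chainProd T u0 u' := chainProd_pos hT_pos _ _
  have hu : markovCyl lam T (u0 :: u') ≤ chainProd T u0 u' := by
    show lam u0 * chainProd T u0 u' ≤ _
    nlinarith [hlam_le u0, hlam_pos u0]
  have hupos : 0 < markovCyl lam T (u0 :: u') := markovCyl_pos hlam_pos hT_pos _
  nlinarith [mul_le_mul_of_nonneg_right (mul_le_mul_of_nonneg_left h1 hv.le) hu'.le,
    mul_nonneg (mul_nonneg hc_nonneg hv.le) (sub_nonneg.2 hu)]


lemma preimage_iter_inter_cyl (u v : List (Fin N)) (r : ℕ) :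
    shift^[v.length + r] ⁻¹' cyl u ∩ cyl v
      = ⋃ t : Fin r → Fin N, cyl (v ++ (List.ofFn t ++ u)) := by
  ext ω
  simp only [Set.mem_iUnion, Set.mem_inter_iff, Set.mem_preimage]
  constructor
  · rintro ⟨hu, hv⟩
    refine ⟨fun k => ω (v.length + k), ?_⟩
    rw [cyl_append]
    refine ⟨hv, ?_⟩
    rw [Set.mem_preimage, cyl_append]
    constructor
    · apply mem_cyl_ofFn.2
      intro k
      simp only [shift_iter]
      exact congrArg ω (by omega)
    · rw [Set.mem_preimage]
      have : shift^[(List.ofFn fun k : Fin r => ω (v.length + ↑k)).length]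
          (shift^[v.length] ω) = shift^[v.length + r] ω := by
        rw [← Function.iterate_add_apply]
        congr 1
        simp [List.length_ofFn]
        omega
      rw [this]
      exact hu
  · rintro ⟨t, ht⟩
    rw [cyl_append] at ht
    obtain ⟨hv, ht2⟩ := ht
    rw [Set.mem_preimage, cyl_append] at ht2
    obtain ⟨-, ht3⟩ := ht2
    rw [Set.mem_preimage, ← Function.iterate_add_apply] at ht3
    refine ⟨?_, hv⟩
    have hlen : (List.ofFn t).length + v.length = v.length + r := by
      simp [List.length_ofFn]; omega
    rwa [hlen] at ht3

lemma cyl_append_subset_left (v u : List (Fin N)) : cyl (v ++ u) ⊆ cyl v := by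
  rw [cyl_append]; exact Set.inter_subset_left

variable {lam : Fin N → ℝ} {T : Fin N → Fin N → ℝ} {μ : Measure (Word N)}

lemma mixing_cyl {c : ℝ}
    (hc : ∀ i j, c ≤ T i j) (hc_nonneg : 0 ≤ c) (hc_le_one : c ≤ 1)
    (hlam_pos : ∀ i, 0 < lam i) (hT_pos : ∀ i j, 0 < T i j)
    (hrow : ∀ i, ∑ j, T i j = 1) (hstat : ∀ j, ∑ i, lam i * T i j = lam j)
    [IsProbabilityMeasure μ]
    (hμ : ∀ w : List (Fin N), μ (cyl w) = ENNReal.ofReal (markovCyl lam T w))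
    (u v : List (Fin N)) (n : ℕ) (hn : v.length ≤ n) :
    ENNReal.ofReal c * μ (cyl u) * μ (cyl v)
      ≤ μ (shift^[n] ⁻¹' cyl u ∩ cyl v) := by
  have hc_e : ENNReal.ofReal c ≤ 1 := by
    rw [← ENNReal.ofReal_one]; exact ENNReal.ofReal_le_ofReal hc_le_one
  cases u with
  | nil =>
    rw [cyl_nil, Set.preimage_univ, Set.univ_inter, measure_univ]
    calc ENNReal.ofReal c * 1 * μ (cyl v) ≤ 1 * 1 * μ (cyl v) := by
          gcongr
    _ = μ (cyl v) := by rw [one_mul, one_mul]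
  | cons u0 u' =>
    cases v with
    | nil =>
      rw [cyl_nil, Set.inter_univ, measure_univ,
        ((shift_preserving hlam_pos hT_pos hstat hμ).iterate n).measure_preimage
          (measurableSet_cyl _).nullMeasurableSet]
      calc ENNReal.ofReal c * μ (cyl (u0 :: u')) * 1 ≤ 1 * μ (cyl (u0 :: u')) * 1 := by gcongr
      _ = μ (cyl (u0 :: u')) := by rw [one_mul, mul_one]
    | cons v0 v' =>
      obtain ⟨r, rfl⟩ : ∃ r, n = (v0 :: v').length + r :=
        ⟨n - (v0 :: v').length, by omega⟩
      rw [preimage_iter_inter_cyl,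
        measure_iUnion ?_ fun t => measurableSet_cyl _, tsum_fintype]
      · have := markov_mix_real hc hc_nonneg hlam_pos hT_pos hrow
          (fun i => lam_le_one hlam_pos hμ i) u0 u' v0 v' r
        calc ENNReal.ofReal c * μ (cyl (u0 :: u')) * μ (cyl (v0 :: v'))
            = ENNReal.ofReal (c * markovCyl lam T (u0 :: u') * markovCyl lam T (v0 :: v')) := by
              have hmu := (markovCyl_pos hlam_pos hT_pos (u0 :: u')).le
              rw [hμ, hμ, ← ENNReal.ofReal_mul hc_nonneg,
                ← ENNReal.ofReal_mul (mul_nonneg hc_nonneg hmu)]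
        _ ≤ ENNReal.ofReal (∑ t : Fin r → Fin N,
              markovCyl lam T ((v0 :: v') ++ (List.ofFn t ++ (u0 :: u')))) :=
            ENNReal.ofReal_le_ofReal this
        _ = ∑ t : Fin r → Fin N, ENNReal.ofReal
              (markovCyl lam T ((v0 :: v') ++ (List.ofFn t ++ (u0 :: u')))) := by
            rw [ENNReal.ofReal_sum_of_nonneg
              (fun t _ => (markovCyl_pos hlam_pos hT_pos _).le)]
        _ = _ := Finset.sum_congr rfl fun t _ => (hμ _).symm
      · intro t t' htt'
        have hsub : ∀ s : Fin r → Fin N,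
            cyl ((v0 :: v') ++ (List.ofFn s ++ (u0 :: u')))
              ⊆ shift^[(v0 :: v').length] ⁻¹' cyl (List.ofFn s) := by
          intro s
          rw [cyl_append]
          refine Set.inter_subset_right.trans ?_
          rw [cyl_append]
          exact Set.preimage_mono Set.inter_subset_left
        exact Set.disjoint_of_subset (hsub t) (hsub t')
          ((disjoint_cyl_ofFn htt').preimage _)


lemma mixing_cylSet {c : ℝ}
    (hc : ∀ i j, c ≤ T i j) (hc_nonneg : 0 ≤ c) (hc_le_one : c ≤ 1)
    (hlam_pos : ∀ i, 0 < lam i) (hT_pos : ∀ i j, 0 < T i j)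
    (hrow : ∀ i, ∑ j, T i j = 1) (hstat : ∀ j, ∑ i, lam i * T i j = lam j)
    [IsProbabilityMeasure μ]
    (hμ : ∀ w : List (Fin N), μ (cyl w) = ENNReal.ofReal (markovCyl lam T w))
    {n₁ n₂ : ℕ} (S : Finset (Fin n₁ → Fin N)) (S' : Finset (Fin n₂ → Fin N))
    (n : ℕ) (hn : n₂ ≤ n) :
    ENNReal.ofReal c * μ (cylSet N n₁ S) * μ (cylSet N n₂ S')
      ≤ μ (shift^[n] ⁻¹' cylSet N n₁ S ∩ cylSet N n₂ S') := by
  have hUg : ∀ g : Fin n₂ → Fin N,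
      ENNReal.ofReal c * μ (cylSet N n₁ S) * μ (cyl (List.ofFn g))
        ≤ μ (shift^[n] ⁻¹' cylSet N n₁ S ∩ cyl (List.ofFn g)) := by
    intro g
    have hsplit : shift^[n] ⁻¹' cylSet N n₁ S ∩ cyl (List.ofFn g)
        = ⋃ f ∈ S, (shift^[n] ⁻¹' cyl (List.ofFn f) ∩ cyl (List.ofFn g)) := by
      rw [cylSet, Set.preimage_iUnion₂, Set.iUnion₂_inter]
    rw [hsplit, measure_biUnion_finset ?_ ?_]
    · rw [measure_cylSet hμ S, Finset.mul_sum, Finset.sum_mul]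
      apply Finset.sum_le_sum
      intro f hf
      rw [← hμ]
      have hlen : (List.ofFn g).length ≤ n := by simpa using hn
      exact mixing_cyl hc hc_nonneg hc_le_one hlam_pos hT_pos hrow hstat hμ
        (List.ofFn f) (List.ofFn g) n hlen
    · intro f _ f' _ hff'
      exact Set.disjoint_of_subset
        (Set.inter_subset_left) (Set.inter_subset_left)
        ((disjoint_cyl_ofFn hff').preimage _)
    · intro f _
      exact ((measurable_shift.iterate n) (measurableSet_cyl _)).inter (measurableSet_cyl _)
  have hsplit2 : shift^[n] ⁻¹' cylSet N n₁ S ∩ cylSet N n₂ S'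
      = ⋃ g ∈ S', (shift^[n] ⁻¹' cylSet N n₁ S ∩ cyl (List.ofFn g)) := by
    simp only [cylSet, Set.inter_iUnion₂]
  rw [hsplit2, measure_biUnion_finset ?_ ?_]
  · rw [measure_cylSet hμ S', Finset.mul_sum]
    apply Finset.sum_le_sum
    intro g hg
    rw [← hμ]
    exact hUg g
  · intro g _ g' _ hgg'
    exact Set.disjoint_of_subset Set.inter_subset_right Set.inter_subset_right
      (disjoint_cyl_ofFn hgg')
  · intro g _
    exact ((measurable_shift.iterate n) (measurableSet_cylSet S)).inter (measurableSet_cyl _)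

end MeasureFacts

end MarkovErgodic

theorem markov_shift_ergodic {N : ℕ} (hN : 2 ≤ N)
    (lam : Fin N → ℝ) (T : Fin N → Fin N → ℝ)
    (hlam_pos : ∀ i, 0 < lam i) (hT_pos : ∀ i j, 0 < T i j)
    (hrow : ∀ i, ∑ j, T i j = 1) (hstat : ∀ j, ∑ i, lam i * T i j = lam j)
    (μ : Measure (Word N)) [IsProbabilityMeasure μ]
    (hμ : ∀ w : List (Fin N), μ (cyl w) = ENNReal.ofReal (markovCyl lam T w)) :
    ∀ A : Set (Word N), MeasurableSet A → shift ⁻¹' A = A →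
      μ A = 0 ∨ μ A = μ Set.univ := by
  open MarkovErgodic in
  intro A hA hinv
  have hinv_n : ∀ k, shift^[k] ⁻¹' A = A := by
    intro k
    induction k with
    | zero => rfl
    | succ k ih => rw [Function.iterate_succ, Set.preimage_comp, ih, hinv]
  by_cases hA0 : μ A = 0
  · exact Or.inl hA0
  right
  rw [measure_univ]
  by_contra hA1
  have hAc0 : μ Aᶜ ≠ 0 := by
    intro h
    apply hA1
    have hsum : μ A + μ Aᶜ = 1 := by
      rw [measure_add_measure_compl hA, measure_univ]
    rw [h, add_zero] at hsum
    exact hsum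
  -- the constant c
  have hNpos : 0 < N := by omega
  have : Nonempty (Fin N × Fin N) := ⟨(⟨0, hNpos⟩, ⟨0, hNpos⟩)⟩
  set c : ℝ := Finset.univ.inf' Finset.univ_nonempty (fun p : Fin N × Fin N => T p.1 p.2) with hc_def
  have hc : ∀ i j, c ≤ T i j := fun i j => Finset.inf'_le _ (Finset.mem_univ (i, j))
  have hc_pos : 0 < c := by
    rw [hc_def, Finset.lt_inf'_iff]
    exact fun p _ => hT_pos p.1 p.2
  have hc_le_one : c ≤ 1 :=
    (hc ⟨0, hNpos⟩ ⟨0, hNpos⟩).trans (MarkovErgodic.T_le_one hT_pos hrow _ _)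
  -- real quantities
  set a : ℝ := (μ A).toReal with ha_def
  set b : ℝ := (μ Aᶜ).toReal with hb_def
  have ha : 0 < a := ENNReal.toReal_pos hA0 (measure_ne_top μ A)
  have hb : 0 < b := ENNReal.toReal_pos hAc0 (measure_ne_top μ Aᶜ)
  have ha1 : a ≤ 1 := by
    rw [ha_def, ← ENNReal.toReal_one]
    exact ENNReal.toReal_mono one_ne_top prob_le_one
  have hb1 : b ≤ 1 := by
    rw [hb_def, ← ENNReal.toReal_one]
    exact ENNReal.toReal_mono one_ne_top prob_le_one
  set ε : ℝ := c * a * b / 8 with hε_def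
  have hε : 0 < ε := by positivity
  -- approximation
  have hdense : μ.MeasureDense (MarkovErgodic.cylAlgebra N) :=
    Measure.MeasureDense.of_generateFrom_isSetAlgebra_finite μ
      MarkovErgodic.isSetAlgebra_cylAlgebra MarkovErgodic.generateFrom_cylAlgebra
  obtain ⟨U, hU𝒜, hU⟩ := hdense.approx A hA (measure_ne_top μ A) ε hε
  obtain ⟨V, hV𝒜, hV⟩ := hdense.approx Aᶜ hA.compl (measure_ne_top μ Aᶜ) ε hε
  obtain ⟨n₁, S, rfl⟩ := hU𝒜
  obtain ⟨n₂, S', rfl⟩ := hV𝒜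
  set U := MarkovErgodic.cylSet N n₁ S with hU_def
  set V := MarkovErgodic.cylSet N n₂ S' with hV_def
  have hUmeas : MeasurableSet U := MarkovErgodic.measurableSet_cylSet S
  have hVmeas : MeasurableSet V := MarkovErgodic.measurableSet_cylSet S'
  have hmp : MeasurePreserving (shift : Word N → Word N) μ μ :=
    MarkovErgodic.shift_preserving hlam_pos hT_pos hstat hμ
  -- upper bound
  have hsub : shift^[n₂] ⁻¹' U ∩ V ⊆ (shift^[n₂] ⁻¹' (U \ A)) ∪ (V \ Aᶜ) := by
    intro ω ⟨hu, hv⟩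
    by_cases hωA : ω ∈ A
    · exact Or.inr ⟨hv, fun h => h hωA⟩
    · left
      refine ⟨hu, fun h => hωA ?_⟩
      rw [← hinv_n n₂]
      exact h
  have hupper : μ (shift^[n₂] ⁻¹' U ∩ V) < ENNReal.ofReal ε + ENNReal.ofReal ε := by
    calc μ (shift^[n₂] ⁻¹' U ∩ V) ≤ μ (shift^[n₂] ⁻¹' (U \ A)) + μ (V \ Aᶜ) :=
          (measure_mono hsub).trans (measure_union_le _ _)
    _ = μ (U \ A) + μ (V \ Aᶜ) := by
        rw [(hmp.iterate n₂).measure_preimage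
          ((hUmeas.diff hA).nullMeasurableSet)]
    _ ≤ μ (A ∆ U) + μ (Aᶜ ∆ V) := by
        gcongr
        · exact fun ω hω => Set.mem_symmDiff.2 (Or.inr ⟨hω.1, hω.2⟩)
        · exact fun ω hω => Set.mem_symmDiff.2 (Or.inr ⟨hω.1, hω.2⟩)
    _ < ENNReal.ofReal ε + ENNReal.ofReal ε := by
        exact ENNReal.add_lt_add hU hV
  -- lower bound
  have hlower : ENNReal.ofReal c * μ U * μ V ≤ μ (shift^[n₂] ⁻¹' U ∩ V) :=
    MarkovErgodic.mixing_cylSet hc hc_pos.le hc_le_one hlam_pos hT_pos hrow hstat hμ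
      S S' n₂ le_rfl
  -- closeness of measures
  have hμA_le : μ A ≤ μ U + ENNReal.ofReal ε := by
    calc μ A ≤ μ (U ∪ (A ∆ U)) := measure_mono (by
          intro ω hω
          by_cases h : ω ∈ U
          · exact Set.mem_union_left _ h
          · exact Set.mem_union_right _ (Set.mem_symmDiff.2 (Or.inl ⟨hω, h⟩)))
    _ ≤ μ U + μ (A ∆ U) := measure_union_le _ _
    _ ≤ μ U + ENNReal.ofReal ε := add_le_add_right hU.le _
  have hμAc_le : μ Aᶜ ≤ μ V + ENNReal.ofReal ε := by
    calc μ Aᶜ ≤ μ (V ∪ (Aᶜ ∆ V)) := measure_mono (by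
          intro ω hω
          by_cases h : ω ∈ V
          · exact Set.mem_union_left _ h
          · exact Set.mem_union_right _ (Set.mem_symmDiff.2 (Or.inl ⟨hω, h⟩)))
    _ ≤ μ V + μ (Aᶜ ∆ V) := measure_union_le _ _
    _ ≤ μ V + ENNReal.ofReal ε := add_le_add_right hV.le _
  -- to reals
  set uR : ℝ := (μ U).toReal with huR_def
  set vR : ℝ := (μ V).toReal with hvR_def
  have huR0 : 0 ≤ uR := ENNReal.toReal_nonneg
  have hvR0 : 0 ≤ vR := ENNReal.toReal_nonneg
  have hu' : a ≤ uR + ε := by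
    have := ENNReal.toReal_mono (by finiteness) hμA_le
    rwa [ENNReal.toReal_add (measure_ne_top μ U) ENNReal.ofReal_ne_top,
      ENNReal.toReal_ofReal hε.le] at this
  have hv' : b ≤ vR + ε := by
    have := ENNReal.toReal_mono (by finiteness) hμAc_le
    rwa [ENNReal.toReal_add (measure_ne_top μ V) ENNReal.ofReal_ne_top,
      ENNReal.toReal_ofReal hε.le] at this
  have hkey : c * uR * vR ≤ ε + ε := by
    have h1 : ENNReal.ofReal c * μ U * μ V ≤ ENNReal.ofReal ε + ENNReal.ofReal ε :=
      hlower.trans hupper.le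
    have := ENNReal.toReal_mono (by finiteness) h1
    rwa [ENNReal.toReal_add ENNReal.ofReal_ne_top ENNReal.ofReal_ne_top,
      ENNReal.toReal_mul, ENNReal.toReal_mul, ENNReal.toReal_ofReal hc_pos.le,
      ENNReal.toReal_ofReal hε.le] at this
  -- final contradiction
  have hcb : c * b ≤ 1 := by nlinarith
  have hca : c * a ≤ 1 := by nlinarith
  have hεa : ε ≤ a / 8 := by nlinarith [mul_nonneg (sub_nonneg.2 hcb) ha.le]
  have hεb : ε ≤ b / 8 := by nlinarith [mul_nonneg (sub_nonneg.2 hca) hb.le]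
  have huR7 : 7 * a / 8 ≤ uR := by linarith
  have hvR7 : 7 * b / 8 ≤ vR := by linarith
  have hprod : (7 * a / 8) * (7 * b / 8) ≤ uR * vR :=
    mul_le_mul huR7 hvR7 (by positivity) (le_trans (by positivity) huR7)
  have h2 : c * ((7 * a / 8) * (7 * b / 8)) ≤ c * (uR * vR) :=
    mul_le_mul_of_nonneg_left hprod hc_pos.le
  nlinarith [mul_pos (mul_pos hc_pos ha) hb]
end
end

section
/- Let z₀,…,z_{N−1} be nonzero complex numbers with Σ|z_i|² = 1, let p_i = |z_i|², and let μ be the Bernoulli product measure on K_N with weights p_i. Define f_i = (1/z_i)·χ_{σ_i(K_N)} and S_i f = f_i·(f∘σ) on L²(μ). Then the S_i satisfy the Cuntz relations, and the constant function 1 satisfies S_i* 1 = z_i · 1 for all i ∈ Z_N. -/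
open MeasureTheory ENNReal

noncomputable section

set_option linter.unusedVariables false
set_option linter.unusedSectionVars false
set_option linter.unnecessarySimpa false

namespace Kaku

open ComplexConjugate

variable {N : ℕ}

lemma measurable_shift : Measurable (shift (N := N)) :=
  measurable_pi_lambda _ fun n => measurable_pi_apply _

lemma measurable_prepend (i : Fin N) : Measurable (prepend i) :=
  measurable_pi_lambda _ fun n => by
    cases n with
    | zero => exact measurable_const
    | succ n => exact measurable_pi_apply _

@[simp] lemma shift_prepend (i : Fin N) (x : Word N) : shift (prepend i x) = x := rfl

@[simp] lemma prepend_zero (i : Fin N) (x : Word N) : prepend i x 0 = i := rfl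

@[simp] lemma cyl_nil : cyl ([] : List (Fin N)) = Set.univ := by
  ext x; simp only [cyl, Set.mem_setOf_eq, Set.mem_univ, iff_true]
  exact fun k => absurd k.2 (by simp)

lemma mem_cyl_cons {i : Fin N} {w : List (Fin N)} {x : Word N} :
    x ∈ cyl (i :: w) ↔ x 0 = i ∧ shift x ∈ cyl w := by
  constructor
  · intro h
    refine ⟨h ⟨0, by simp⟩, fun k => ?_⟩
    have := h ⟨k + 1, by simpa using Nat.succ_lt_succ k.2⟩
    simpa [shift] using this
  · rintro ⟨h0, h⟩ k
    match k with
    | ⟨0, hk⟩ => exact h0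
    | ⟨m + 1, hk⟩ =>
      have := h ⟨m, by simpa using Nat.lt_of_succ_lt_succ hk⟩
      simpa [shift] using this

lemma mem_cyl_singleton {i : Fin N} {x : Word N} : x ∈ cyl [i] ↔ x 0 = i := by
  rw [mem_cyl_cons]; simp

lemma measurableSet_cyl (w : List (Fin N)) : MeasurableSet (cyl w) := by
  have : cyl w = ⋂ k : Fin w.length, (fun ω : Word N => ω k) ⁻¹' {w.get k} := by
    ext x; simp [cyl, Set.mem_iInter]
  rw [this]
  exact MeasurableSet.iInter fun k =>
    (measurable_pi_apply (k : ℕ)) (measurableSet_singleton _)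

lemma shift_preimage_cyl (w : List (Fin N)) :
    shift ⁻¹' cyl w = ⋃ i : Fin N, cyl (i :: w) := by
  ext x
  simp only [Set.mem_preimage, Set.mem_iUnion, mem_cyl_cons]
  constructor
  · intro h; exact ⟨x 0, rfl, h⟩
  · rintro ⟨i, _, h⟩; exact h

lemma generateFrom_cyl :
    (inferInstance : MeasurableSpace (Word N)) =
      MeasurableSpace.generateFrom {s : Set (Word N) | ∃ w, s = cyl w} := by
  set m := MeasurableSpace.generateFrom {s : Set (Word N) | ∃ w, s = cyl w} with hm
  refine le_antisymm ?_ ?_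
  · have hbasic : ∀ w : List (Fin N), MeasurableSet[m] (cyl w) := fun w =>
      MeasurableSpace.measurableSet_generateFrom ⟨w, rfl⟩
    have hshift : @Measurable _ _ m m shift := by
      intro s hs
      induction hs with
      | basic u hu =>
        obtain ⟨w, rfl⟩ := hu
        rw [shift_preimage_cyl]
        exact MeasurableSet.iUnion fun i => hbasic _
      | empty => simp
      | compl u _ ih => exact (MeasurableSet.compl ih)
      | iUnion g _ ih => rw [Set.preimage_iUnion]; exact MeasurableSet.iUnion ih
    have heval : ∀ k : ℕ, @Measurable _ _ m _ (fun x : Word N => x k) := by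
      intro k
      induction k with
      | zero =>
        refine @measurable_to_countable' (Fin N) (Word N) _ _ m _ fun j => ?_
        have : (fun x : Word N => x 0) ⁻¹' {j} = cyl [j] := by
          ext x; simp [mem_cyl_singleton]
        rw [this]; exact hbasic _
      | succ k ih =>
        have : (fun x : Word N => x (k + 1)) = (fun x : Word N => x k) ∘ shift := rfl
        rw [this]
        exact @Measurable.comp _ _ _ m m _ _ _ ih hshift
    rw [MeasurableSpace.pi]
    exact iSup_le fun k => Measurable.comap_le (heval k)
  · rw [hm, MeasurableSpace.generateFrom_le_iff]
    rintro s ⟨w, rfl⟩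
    exact measurableSet_cyl w

lemma isPiSystem_cyl : IsPiSystem {s : Set (Word N) | ∃ w, s = cyl w} := by
  have key : ∀ w₁ w₂ : List (Fin N), w₁.length ≤ w₂.length →
      (cyl w₁ ∩ cyl w₂ : Set (Word N)).Nonempty → cyl w₁ ∩ cyl w₂ = cyl w₂ := by
    intro w₁ w₂ hlen ⟨x, hx₁, hx₂⟩
    apply Set.inter_eq_self_of_subset_right
    intro y hy k
    have h1 := hx₁ k
    have h2 := hx₂ ⟨k, lt_of_lt_of_le k.2 hlen⟩
    have h3 := hy ⟨k, lt_of_lt_of_le k.2 hlen⟩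
    simp only at h1 h2 h3 ⊢
    rw [h3, ← h2, h1]
  rintro _ ⟨w₁, rfl⟩ _ ⟨w₂, rfl⟩ hne
  rcases le_total w₁.length w₂.length with h | h
  · exact ⟨w₂, (key w₁ w₂ h hne).symm ▸ rfl⟩
  · rw [Set.inter_comm] at hne ⊢
    exact ⟨w₁, (key w₂ w₁ h hne).symm ▸ rfl⟩


section Meas2
-- new material
lemma measure_ext {μ ν : Measure (Word N)} [IsFiniteMeasure μ] [IsFiniteMeasure ν]
    (h : ∀ w, μ (cyl w) = ν (cyl w)) (huniv : μ Set.univ = ν Set.univ) : μ = ν :=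
  ext_of_generate_finite _ generateFrom_cyl isPiSystem_cyl
    (by rintro s ⟨w, rfl⟩; exact h w) huniv

lemma prepend_preimage_cyl_cons (i j : Fin N) (w : List (Fin N)) :
    prepend i ⁻¹' cyl (j :: w) = if i = j then cyl w else ∅ := by
  ext x
  simp only [Set.mem_preimage, mem_cyl_cons, prepend_zero, shift_prepend]
  split_ifs with h <;> simp [h]

lemma cyl_cons_inter_singleton (i j : Fin N) (w : List (Fin N)) :
    cyl (j :: w) ∩ cyl [i] = if i = j then cyl (j :: w) else ∅ := by
  ext x
  rw [Set.mem_inter_iff, mem_cyl_singleton]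
  split_ifs with h
  · subst h
    exact ⟨fun h' => h'.1, fun h' => ⟨h', (mem_cyl_cons.1 h').1⟩⟩
  · simp only [Set.mem_empty_iff_false, iff_false]
    rintro ⟨h1, h2⟩
    exact h (h2.symm.trans (mem_cyl_cons.1 h1).1)

variable (p : Fin N → ℝ) (μ : Measure (Word N)) [IsProbabilityMeasure μ]

lemma shift_mp (hμ : ∀ w : List (Fin N), μ (cyl w) = ENNReal.ofReal ((w.map p).prod))
    (hp0 : ∀ i, 0 ≤ p i) (hsum : ∑ i, p i = 1) :
    MeasurePreserving shift μ μ := by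
  refine ⟨measurable_shift, ?_⟩
  have : IsProbabilityMeasure (μ.map shift) :=
    Measure.isProbabilityMeasure_map measurable_shift.aemeasurable
  refine measure_ext (fun w => ?_) (by simp)
  have hdisj : Pairwise (Function.onFun Disjoint fun i : Fin N => cyl (i :: w)) := by
    intro a b hab
    simp only [Function.onFun]
    rw [Set.disjoint_left]
    intro x hxa hxb
    exact hab ((mem_cyl_cons.1 hxa).1.symm.trans (mem_cyl_cons.1 hxb).1)
  rw [Measure.map_apply measurable_shift (measurableSet_cyl w), shift_preimage_cyl,
    measure_iUnion hdisj fun i => measurableSet_cyl _, tsum_fintype]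
  have hr : 0 ≤ (w.map p).prod := by
    apply List.prod_nonneg
    intro a ha
    obtain ⟨i, -, rfl⟩ := List.mem_map.1 ha
    exact hp0 i
  simp only [hμ, List.map_cons, List.prod_cons]
  rw [← ENNReal.ofReal_sum_of_nonneg fun i _ => mul_nonneg (hp0 i) hr, ← Finset.sum_mul,
    hsum, one_mul]

lemma map_prepend (hμ : ∀ w : List (Fin N), μ (cyl w) = ENNReal.ofReal ((w.map p).prod))
    (hp0 : ∀ i, 0 < p i) (i : Fin N) :
    μ.map (prepend i) = (ENNReal.ofReal (p i))⁻¹ • μ.restrict (cyl [i]) := by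
  have hci : μ (cyl [i]) = ENNReal.ofReal (p i) := by simpa using hμ [i]
  have hne : ENNReal.ofReal (p i) ≠ 0 := by
    exact (ENNReal.ofReal_pos.2 (hp0 i)).ne' 
  have h1 : IsProbabilityMeasure (μ.map (prepend i)) :=
    Measure.isProbabilityMeasure_map (measurable_prepend i).aemeasurable
  have h2 : IsFiniteMeasure ((ENNReal.ofReal (p i))⁻¹ • μ.restrict (cyl [i])) := by
    constructor
    rw [Measure.smul_apply, smul_eq_mul, Measure.restrict_apply MeasurableSet.univ,
      Set.univ_inter, hci, ENNReal.inv_mul_cancel hne ofReal_ne_top]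
    exact one_lt_top
  have huniv : (μ.map (prepend i)) Set.univ
      = ((ENNReal.ofReal (p i))⁻¹ • μ.restrict (cyl [i])) Set.univ := by
    rw [Measure.smul_apply, smul_eq_mul, Measure.restrict_apply MeasurableSet.univ,
      Set.univ_inter, hci, ENNReal.inv_mul_cancel hne ofReal_ne_top]
    simp
  refine measure_ext (fun w => ?_) huniv
  rw [Measure.map_apply (measurable_prepend i) (measurableSet_cyl w),
    Measure.smul_apply, smul_eq_mul, Measure.restrict_apply (measurableSet_cyl w)]
  cases w with
  | nil =>
    rw [cyl_nil, Set.preimage_univ, Set.univ_inter, hci,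
      ENNReal.inv_mul_cancel hne ofReal_ne_top]
    simp
  | cons j w =>
    rw [prepend_preimage_cyl_cons, cyl_cons_inter_singleton]
    by_cases h : i = j
    · subst h
      rw [if_pos rfl, if_pos rfl, hμ, hμ, List.map_cons, List.prod_cons,
        ENNReal.ofReal_mul (hp0 i).le, ← mul_assoc,
        ENNReal.inv_mul_cancel hne ofReal_ne_top, one_mul]
    · rw [if_neg h, if_neg h]
      simp

lemma map_prepend_ac (hμ : ∀ w : List (Fin N), μ (cyl w) = ENNReal.ofReal ((w.map p).prod))
    (hp0 : ∀ i, 0 < p i) (i : Fin N) : μ.map (prepend i) ≪ μ := by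
  rw [map_prepend p μ hμ hp0 i]
  intro s hs
  rw [Measure.smul_apply, smul_eq_mul]
  rw [Measure.restrict_apply₀' (measurableSet_cyl [i]).nullMeasurableSet]
  have : μ (s ∩ cyl [i]) = 0 := measure_mono_null Set.inter_subset_left hs
  rw [this, mul_zero]

lemma qmp_prepend (hμ : ∀ w : List (Fin N), μ (cyl w) = ENNReal.ofReal ((w.map p).prod))
    (hp0 : ∀ i, 0 < p i) (i : Fin N) :
    Measure.QuasiMeasurePreserving (prepend i) μ μ :=
  ⟨measurable_prepend i, map_prepend_ac p μ hμ hp0 i⟩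

lemma map_shift_restrict (hμ : ∀ w : List (Fin N), μ (cyl w) = ENNReal.ofReal ((w.map p).prod))
    (hp0 : ∀ i, 0 < p i) (i : Fin N) :
    (μ.restrict (cyl [i])).map shift = ENNReal.ofReal (p i) • μ := by
  have hne : ENNReal.ofReal (p i) ≠ 0 := by
    exact (ENNReal.ofReal_pos.2 (hp0 i)).ne' 
  have h1 : μ.restrict (cyl [i]) = ENNReal.ofReal (p i) • μ.map (prepend i) := by
    rw [map_prepend p μ hμ hp0 i, smul_smul,
      ENNReal.mul_inv_cancel hne ofReal_ne_top, one_smul]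
  rw [h1, Measure.map_smul, Measure.map_map measurable_shift (measurable_prepend i)]
  have : shift ∘ prepend i = id := funext fun x => shift_prepend i x
  rw [this, Measure.map_id]


end Meas2
lemma prepend_shift {N : ℕ} {i : Fin N} {x : Word N} (h : x 0 = i) :
    prepend i (shift x) = x := by
  funext n
  cases n with
  | zero => exact h.symm
  | succ n => rfl

section Op

variable {N : ℕ} (z : Fin N → ℂ) (p : Fin N → ℝ) (μ : Measure (Word N))
  [IsProbabilityMeasure μ]

/-- The pointwise formula for `S i`. -/
def Sfun (i : Fin N) (g : Word N → ℂ) : Word N → ℂ :=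
  fun x => (if x 0 = i then (z i)⁻¹ else 0) * g (shift x)

lemma Sfun_eq_indicator (i : Fin N) (g : Word N → ℂ) :
    Sfun z i g = (cyl [i]).indicator (fun x => (z i)⁻¹ * g (shift x)) := by
  funext x
  by_cases h : x 0 = i
  · rw [Sfun, if_pos h, Set.indicator_of_mem (mem_cyl_singleton.2 h)]
  · rw [Sfun, if_neg h, Set.indicator_of_notMem
      (fun hc => h (mem_cyl_singleton.1 hc)), zero_mul]

variable {μ}

lemma memS (hsp : MeasurePreserving shift μ μ) (i : Fin N) (g : Lp ℂ 2 μ) :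
    MemLp (Sfun z i ⇑g) 2 μ := by
  rw [Sfun_eq_indicator]
  exact (((Lp.memLp g).comp_measurePreserving hsp).const_mul _).indicator
    (measurableSet_cyl [i])

lemma eLpNorm_S_le (hsp : MeasurePreserving shift μ μ) (i : Fin N) (g : Lp ℂ 2 μ) :
    eLpNorm (Sfun z i ⇑g) 2 μ ≤ (‖(z i)⁻¹‖₊ : ℝ≥0∞) * eLpNorm (⇑g) 2 μ := by
  rw [Sfun_eq_indicator]
  calc eLpNorm ((cyl [i]).indicator fun x => (z i)⁻¹ * ⇑g (shift x)) 2 μ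
      ≤ eLpNorm (fun x => (z i)⁻¹ * ⇑g (shift x)) 2 μ := eLpNorm_indicator_le _
    _ = (‖(z i)⁻¹‖₊ : ℝ≥0∞) * eLpNorm (⇑g ∘ shift) 2 μ :=
        eLpNorm_const_smul ((z i)⁻¹) (⇑g ∘ shift) 2 μ
    _ = (‖(z i)⁻¹‖₊ : ℝ≥0∞) * eLpNorm (⇑g) 2 μ := by
        rw [eLpNorm_comp_measurePreserving (Lp.aestronglyMeasurable g) hsp]

/-- The operator `S i` on `L²`. -/
def Sop (hsp : MeasurePreserving shift μ μ) (i : Fin N) :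
    Lp ℂ 2 μ →L[ℂ] Lp ℂ 2 μ :=
  LinearMap.mkContinuous
    { toFun := fun g => (memS z hsp i g).toLp
      map_add' := by
        intro g h
        rw [← MemLp.toLp_add]
        refine MemLp.toLp_congr _ _ ?_
        filter_upwards [hsp.quasiMeasurePreserving.ae_eq (Lp.coeFn_add g h)] with x hx
        simp only [Function.comp_apply, Pi.add_apply] at hx
        simp only [Sfun, Pi.add_apply]
        rw [hx]
        ring
      map_smul' := by
        intro c g
        rw [RingHom.id_apply, ← MemLp.toLp_const_smul]
        refine MemLp.toLp_congr (memS z hsp i (c • g))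
          ((memS z hsp i g).const_smul c) ?_
        filter_upwards [hsp.quasiMeasurePreserving.ae_eq (Lp.coeFn_smul c g)] with x hx
        simp only [Function.comp_apply, Pi.smul_apply, smul_eq_mul] at hx
        simp only [Sfun, Pi.smul_apply, smul_eq_mul]
        rw [hx]
        ring }
    ‖(z i)⁻¹‖
    (fun g => by
      simp only [LinearMap.coe_mk, AddHom.coe_mk]
      rw [Lp.norm_toLp]
      have h2 : (‖(z i)⁻¹‖₊ : ℝ≥0∞) * eLpNorm (⇑g) 2 μ ≠ ∞ :=
        ENNReal.mul_ne_top ENNReal.coe_ne_top (Lp.eLpNorm_ne_top g)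
      refine le_trans (ENNReal.toReal_mono h2 (eLpNorm_S_le z hsp i g)) ?_
      rw [ENNReal.toReal_mul, ENNReal.coe_toReal, coe_nnnorm, ← Lp.norm_def])

lemma Sop_coe (hsp : MeasurePreserving shift μ μ) (i : Fin N) (g : Lp ℂ 2 μ) :
    ⇑(Sop z hsp i g) =ᵐ[μ] Sfun z i ⇑g :=
  MemLp.coeFn_toLp (memS z hsp i g)

/-- The pointwise formula for the adjoint. -/
def Tfun (i : Fin N) (g : Word N → ℂ) : Word N → ℂ :=
  fun x => z i * g (prepend i x)

lemma eLpNorm_comp_prepend_le (i : Fin N)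
    (hmap : μ.map (prepend i) = (ENNReal.ofReal (p i))⁻¹ • μ.restrict (cyl [i]))
    (hac : μ.map (prepend i) ≪ μ) (g : Word N → ℂ) (hg : AEStronglyMeasurable g μ) :
    eLpNorm (g ∘ prepend i) 2 μ ≤
      (ENNReal.ofReal (p i))⁻¹ ^ ((1 : ℝ≥0∞) / 2).toReal * eLpNorm g 2 μ := by
  rw [← eLpNorm_map_measure (hg.mono_ac hac) (measurable_prepend i).aemeasurable, hmap,
    eLpNorm_smul_measure_of_ne_top (by norm_num : (2 : ℝ≥0∞) ≠ ∞), smul_eq_mul]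
  exact mul_le_mul_right (eLpNorm_mono_measure _ Measure.restrict_le_self) _

lemma memT (i : Fin N)
    (hmap : μ.map (prepend i) = (ENNReal.ofReal (p i))⁻¹ • μ.restrict (cyl [i]))
    (hac : μ.map (prepend i) ≪ μ) (hpi : 0 < p i) (g : Lp ℂ 2 μ) :
    MemLp (Tfun z i ⇑g) 2 μ := by
  have hK : (ENNReal.ofReal (p i))⁻¹ ^ ((1 : ℝ≥0∞) / 2).toReal ≠ ∞ := by
    apply ENNReal.rpow_ne_top_of_nonneg (by positivity)
    simp [ENNReal.inv_ne_top, ENNReal.ofReal_pos, hpi]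
  have h0 : MemLp (⇑g ∘ prepend i) 2 μ := by
    refine ⟨(Lp.aestronglyMeasurable g).comp_quasiMeasurePreserving
      ⟨measurable_prepend i, hac⟩, ?_⟩
    refine lt_of_le_of_lt
      (eLpNorm_comp_prepend_le p i hmap hac ⇑g (Lp.aestronglyMeasurable g)) ?_
    exact ENNReal.mul_lt_top hK.lt_top (Lp.eLpNorm_lt_top g)
  exact h0.const_mul (z i)

lemma eLpNorm_T_le (i : Fin N)
    (hmap : μ.map (prepend i) = (ENNReal.ofReal (p i))⁻¹ • μ.restrict (cyl [i]))
    (hac : μ.map (prepend i) ≪ μ) (g : Lp ℂ 2 μ) :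
    eLpNorm (Tfun z i ⇑g) 2 μ ≤
      (‖z i‖₊ : ℝ≥0∞) * ((ENNReal.ofReal (p i))⁻¹ ^ ((1 : ℝ≥0∞) / 2).toReal
        * eLpNorm (⇑g) 2 μ) := by
  have h1 : eLpNorm (Tfun z i ⇑g) 2 μ
      = (‖z i‖₊ : ℝ≥0∞) * eLpNorm (⇑g ∘ prepend i) 2 μ :=
    eLpNorm_const_smul (z i) (⇑g ∘ prepend i) 2 μ
  rw [h1]
  exact mul_le_mul_right
    (eLpNorm_comp_prepend_le p i hmap hac ⇑g (Lp.aestronglyMeasurable g)) _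

/-- The operator `T i = S i†` on `L²`. -/
def Top (i : Fin N)
    (hmap : μ.map (prepend i) = (ENNReal.ofReal (p i))⁻¹ • μ.restrict (cyl [i]))
    (hac : μ.map (prepend i) ≪ μ) (hpi : 0 < p i) :
    Lp ℂ 2 μ →L[ℂ] Lp ℂ 2 μ :=
  LinearMap.mkContinuous
    { toFun := fun g => (memT z p i hmap hac hpi g).toLp
      map_add' := by
        intro g h
        rw [← MemLp.toLp_add]
        refine MemLp.toLp_congr (memT z p i hmap hac hpi (g + h))
          ((memT z p i hmap hac hpi g).add (memT z p i hmap hac hpi h)) ?_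
        have hq : Measure.QuasiMeasurePreserving (prepend i) μ μ :=
          ⟨measurable_prepend i, hac⟩
        filter_upwards [hq.ae_eq (Lp.coeFn_add g h)] with x hx
        simp only [Function.comp_apply, Pi.add_apply] at hx
        simp only [Tfun, Pi.add_apply]
        rw [hx]
        ring
      map_smul' := by
        intro c g
        rw [RingHom.id_apply, ← MemLp.toLp_const_smul]
        refine MemLp.toLp_congr (memT z p i hmap hac hpi (c • g))
          ((memT z p i hmap hac hpi g).const_smul c) ?_
        have hq : Measure.QuasiMeasurePreserving (prepend i) μ μ :=
          ⟨measurable_prepend i, hac⟩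
        filter_upwards [hq.ae_eq (Lp.coeFn_smul c g)] with x hx
        simp only [Function.comp_apply, Pi.smul_apply, smul_eq_mul] at hx
        simp only [Tfun, Pi.smul_apply, smul_eq_mul]
        rw [hx]
        ring }
    (‖z i‖ * ((ENNReal.ofReal (p i))⁻¹ ^ ((1 : ℝ≥0∞) / 2).toReal).toReal)
    (fun g => by
      simp only [LinearMap.coe_mk, AddHom.coe_mk]
      rw [Lp.norm_toLp]
      have hK : (ENNReal.ofReal (p i))⁻¹ ^ ((1 : ℝ≥0∞) / 2).toReal ≠ ∞ := by
        apply ENNReal.rpow_ne_top_of_nonneg (by positivity)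
        simp [ENNReal.inv_ne_top, ENNReal.ofReal_pos, hpi]
      have h2 : (‖z i‖₊ : ℝ≥0∞) * ((ENNReal.ofReal (p i))⁻¹ ^ ((1 : ℝ≥0∞) / 2).toReal
          * eLpNorm (⇑g) 2 μ) ≠ ∞ :=
        ENNReal.mul_ne_top ENNReal.coe_ne_top
          (ENNReal.mul_ne_top hK (Lp.eLpNorm_ne_top g))
      refine le_trans (ENNReal.toReal_mono h2 (eLpNorm_T_le z p i hmap hac g)) ?_
      rw [ENNReal.toReal_mul, ENNReal.toReal_mul, ENNReal.coe_toReal, coe_nnnorm,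
        ← Lp.norm_def, ← mul_assoc])

lemma Top_coe (i : Fin N)
    (hmap : μ.map (prepend i) = (ENNReal.ofReal (p i))⁻¹ • μ.restrict (cyl [i]))
    (hac : μ.map (prepend i) ≪ μ) (hpi : 0 < p i) (g : Lp ℂ 2 μ) :
    ⇑(Top z p i hmap hac hpi g) =ᵐ[μ] Tfun z i ⇑g :=
  MemLp.coeFn_toLp (memT z p i hmap hac hpi g)

open scoped InnerProductSpace in
lemma Top_eq_adjoint (hsp : MeasurePreserving shift μ μ) (i : Fin N)
    (hmap : μ.map (prepend i) = (ENNReal.ofReal (p i))⁻¹ • μ.restrict (cyl [i]))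
    (hac : μ.map (prepend i) ≪ μ) (hpi : 0 < p i) (hzi : z i ≠ 0)
    (hpz : ((p i : ℝ) : ℂ) = conj (z i) * z i) :
    Top z p i hmap hac hpi = ContinuousLinearMap.adjoint (Sop z hsp i) := by
  rw [ContinuousLinearMap.eq_adjoint_iff]
  intro g h
  have hq : Measure.QuasiMeasurePreserving (prepend i) μ μ :=
    ⟨measurable_prepend i, hac⟩
  set G : Word N → ℂ := fun y => conj (⇑g y) * ⇑h (shift y) with hG
  have hGm : AEStronglyMeasurable G μ :=
    (RCLike.continuous_conj.comp_aestronglyMeasurable (Lp.aestronglyMeasurable g)).mul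
      ((Lp.aestronglyMeasurable h).comp_quasiMeasurePreserving hsp.quasiMeasurePreserving)
  have hL : ⟪Top z p i hmap hac hpi g, h⟫_ℂ
      = conj (z i) * (((ENNReal.ofReal (p i))⁻¹).toReal
          • ∫ y in cyl [i], G y ∂μ) := by
    have h1 : ⟪Top z p i hmap hac hpi g, h⟫_ℂ
        = ∫ x, conj (z i) * G (prepend i x) ∂μ := by
      rw [L2.inner_def]
      refine integral_congr_ae ?_
      filter_upwards [Top_coe z p i hmap hac hpi g] with x hx
      rw [RCLike.inner_apply, hx]
      show ⇑h x * conj (z i * ⇑g (prepend i x))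
        = conj (z i) * (conj (⇑g (prepend i x)) * ⇑h (shift (prepend i x)))
      rw [shift_prepend, map_mul]
      ring
    rw [h1, integral_const_mul]
    congr 1
    have h2 : ∫ x, G (prepend i x) ∂μ = ∫ y, G y ∂(μ.map (prepend i)) :=
      (integral_map hq.aemeasurable (hGm.mono_ac hac)).symm
    rw [h2, hmap, integral_smul_measure]
  have hR : ⟪g, Sop z hsp i h⟫_ℂ = (z i)⁻¹ * ∫ y in cyl [i], G y ∂μ := by
    have h1 : ⟪g, Sop z hsp i h⟫_ℂ
        = ∫ x, (cyl [i]).indicator (fun x => (z i)⁻¹ * G x) x ∂μ := by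
      rw [L2.inner_def]
      refine integral_congr_ae ?_
      filter_upwards [Sop_coe z hsp i h] with x hx
      rw [RCLike.inner_apply, hx]
      by_cases hxi : x 0 = i
      · rw [Set.indicator_of_mem (mem_cyl_singleton.2 hxi)]
        show ((if x 0 = i then (z i)⁻¹ else 0) * ⇑h (shift x)) * conj (⇑g x)
          = (z i)⁻¹ * (conj (⇑g x) * ⇑h (shift x))
        rw [if_pos hxi]
        ring
      · rw [Set.indicator_of_notMem (fun hc => hxi (mem_cyl_singleton.1 hc))]
        show ((if x 0 = i then (z i)⁻¹ else 0) * ⇑h (shift x)) * conj (⇑g x) = 0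
        rw [if_neg hxi, zero_mul, zero_mul]
    rw [h1, integral_indicator (measurableSet_cyl [i]), integral_const_mul]
  rw [hL, hR]
  have hr : ((ENNReal.ofReal (p i))⁻¹).toReal = (p i)⁻¹ := by
    rw [ENNReal.toReal_inv, ENNReal.toReal_ofReal hpi.le]
  rw [hr]
  set I := ∫ y in cyl [i], G y ∂μ
  have hconj : conj (z i) ≠ 0 := by
    simpa using hzi
  rw [Complex.real_smul]
  push_cast
  rw [← mul_assoc, hpz, mul_inv, ← mul_assoc, mul_inv_cancel₀ hconj, one_mul]

end Op


lemma coeFn_finset_sum {N : ℕ} {μ : Measure (Word N)} {ι : Type*} (s : Finset ι)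
    (u : ι → Lp ℂ 2 μ) :
    ⇑(∑ j ∈ s, u j) =ᵐ[μ] fun x => ∑ j ∈ s, u j x := by
  classical
  induction s using Finset.induction_on with
  | empty =>
    simp only [Finset.sum_empty]
    exact Lp.coeFn_zero ℂ 2 μ
  | @insert a t hj ih =>
    rw [Finset.sum_insert hj]
    filter_upwards [Lp.coeFn_add (u a) (∑ j ∈ t, u j), ih] with x h1 h2
    rw [h1]
    simp only [Pi.add_apply]
    rw [h2, Finset.sum_insert hj]


end Kaku

open Kaku ComplexConjugate

theorem kakutani_representation {N : ℕ} (hN : 2 ≤ N)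
    (z : Fin N → ℂ) (hz : ∀ i, z i ≠ 0) (hz_sum : ∑ i, ‖z i‖ ^ 2 = 1)
    (p : Fin N → ℝ) (hp : ∀ i, p i = ‖z i‖ ^ 2)
    (μ : Measure (Word N)) [IsProbabilityMeasure μ]
    (hμ : ∀ w : List (Fin N), μ (cyl w) = ENNReal.ofReal ((w.map p).prod))
    (f : Fin N → Word N → ℂ)
    (hf : ∀ i x, f i x = if x 0 = i then 1 / z i else 0) :
    ∃ S : Fin N → (Lp ℂ 2 μ →L[ℂ] Lp ℂ 2 μ),
      (∀ i (g : Lp ℂ 2 μ), ⇑(S i g) =ᵐ[μ] fun x => f i x * g (shift x)) ∧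
      (∀ i j, (ContinuousLinearMap.adjoint (S i)).comp (S j)
          = if i = j then 1 else 0) ∧
      (∑ i, (S i).comp (ContinuousLinearMap.adjoint (S i)) = 1) ∧
      (∀ i, ContinuousLinearMap.adjoint (S i)
            (MemLp.toLp (fun _ => (1 : ℂ)) (memLp_const 1))
          = z i • MemLp.toLp (fun _ => (1 : ℂ)) (memLp_const 1)) := by
  classical
  have hp0 : ∀ i, 0 < p i := fun i => by
    rw [hp i]; exact pow_pos (norm_pos_iff.2 (hz i)) 2
  have hsum : ∑ i, p i = 1 := by simp_rw [hp]; exact hz_sum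
  have hsp : MeasurePreserving shift μ μ :=
    shift_mp p μ hμ (fun i => (hp0 i).le) hsum
  have hmap : ∀ i, μ.map (prepend i) = (ENNReal.ofReal (p i))⁻¹ • μ.restrict (cyl [i]) :=
    map_prepend p μ hμ hp0
  have hac : ∀ i, μ.map (prepend i) ≪ μ := map_prepend_ac p μ hμ hp0
  have hq : ∀ i, Measure.QuasiMeasurePreserving (prepend i) μ μ := fun i =>
    ⟨measurable_prepend i, hac i⟩
  have hpz : ∀ i, ((p i : ℝ) : ℂ) = conj (z i) * z i := fun i => by
    rw [hp i, mul_comm, Complex.mul_conj]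
    norm_cast
    simp [Complex.normSq_eq_norm_sq]
  set S : Fin N → (Lp ℂ 2 μ →L[ℂ] Lp ℂ 2 μ) := fun i => Sop z hsp i with hSdef
  set T : Fin N → (Lp ℂ 2 μ →L[ℂ] Lp ℂ 2 μ) :=
    fun i => Top z p i (hmap i) (hac i) (hp0 i) with hTdef
  have hadj : ∀ i, ContinuousLinearMap.adjoint (S i) = T i := fun i =>
    (Top_eq_adjoint z p hsp i (hmap i) (hac i) (hp0 i) (hz i) (hpz i)).symm
  refine ⟨S, ?_, ?_, ?_, ?_⟩
  · intro i g
    filter_upwards [Sop_coe z hsp i g] with x hx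
    rw [hx, hf]
    simp [Sfun, one_div]
  · intro i j
    rw [hadj i]
    refine ContinuousLinearMap.ext fun g => ?_
    rw [ContinuousLinearMap.comp_apply]
    by_cases hij : i = j
    · subst hij
      rw [if_pos rfl, ContinuousLinearMap.one_apply]
      refine Lp.ext ?_
      filter_upwards [Top_coe z p i (hmap i) (hac i) (hp0 i) (S i g),
        (hq i).ae_eq (Sop_coe z hsp i g)] with x h1 h2
      simp only [Function.comp_apply] at h2
      rw [h1]
      show z i * ⇑(S i g) (prepend i x) = ⇑g x
      rw [h2]
      show z i * ((if prepend i x 0 = i then (z i)⁻¹ else 0) * ⇑g (shift (prepend i x)))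
        = ⇑g x
      rw [prepend_zero, if_pos rfl, shift_prepend, ← mul_assoc,
        mul_inv_cancel₀ (hz i), one_mul]
    · rw [if_neg hij, ContinuousLinearMap.zero_apply]
      refine Lp.ext ?_
      filter_upwards [Top_coe z p i (hmap i) (hac i) (hp0 i) (S j g),
        (hq i).ae_eq (Sop_coe z hsp j g), Lp.coeFn_zero ℂ 2 μ] with x h1 h2 h3
      simp only [Function.comp_apply] at h2
      rw [h1, h3]
      show z i * ⇑(S j g) (prepend i x) = 0
      rw [h2]
      show z i * ((if prepend i x 0 = j then (z j)⁻¹ else 0) * ⇑g (shift (prepend i x)))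
        = 0
      rw [prepend_zero, if_neg hij, zero_mul, mul_zero]
  · refine ContinuousLinearMap.ext fun g => ?_
    have hsum_apply : (∑ i, (S i).comp (ContinuousLinearMap.adjoint (S i))) g
        = ∑ i, (S i) ((T i) g) := by
      rw [ContinuousLinearMap.sum_apply]
      exact Finset.sum_congr rfl fun i _ => by rw [hadj i]; rfl
    rw [hsum_apply, ContinuousLinearMap.one_apply]
    refine Lp.ext ?_
    have key : ∀ i : Fin N, ∀ᵐ x ∂μ,
        ⇑(S i (T i g)) x = if x 0 = i then ⇑g x else 0 := by
      intro i
      filter_upwards [Sop_coe z hsp i (T i g),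
        hsp.quasiMeasurePreserving.ae_eq
          (Top_coe z p i (hmap i) (hac i) (hp0 i) g)] with x h1 h2
      simp only [Function.comp_apply] at h2
      rw [h1]
      show (if x 0 = i then (z i)⁻¹ else 0) * ⇑(T i g) (shift x)
        = if x 0 = i then ⇑g x else 0
      by_cases hxi : x 0 = i
      · rw [if_pos hxi, if_pos hxi, h2]
        show (z i)⁻¹ * (z i * ⇑g (prepend i (shift x))) = ⇑g x
        rw [prepend_shift hxi, ← mul_assoc, inv_mul_cancel₀ (hz i), one_mul]
      · rw [if_neg hxi, if_neg hxi, zero_mul]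
    filter_upwards [coeFn_finset_sum Finset.univ (fun i => S i (T i g)),
      ae_all_iff.2 key] with x h1 h2
    rw [h1]
    calc ∑ i, ⇑(S i (T i g)) x = ∑ i : Fin N, if x 0 = i then ⇑g x else 0 :=
          Finset.sum_congr rfl fun i _ => h2 i
      _ = ⇑g x := by rw [Finset.sum_ite_eq Finset.univ (x 0) fun _ => ⇑g x,
            if_pos (Finset.mem_univ _)]
  · intro i
    rw [hadj i]
    refine Lp.ext ?_
    filter_upwards [Top_coe z p i (hmap i) (hac i) (hp0 i)
        (MemLp.toLp (fun _ => (1 : ℂ)) (memLp_const 1)),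
      (hq i).ae_eq (MemLp.coeFn_toLp (memLp_const (1 : ℂ))),
      Lp.coeFn_smul (z i) (MemLp.toLp (fun _ => (1 : ℂ)) (memLp_const 1)),
      MemLp.coeFn_toLp (memLp_const (1 : ℂ))] with x e1 e2 e3 e4
    simp only [Function.comp_apply] at e2
    rw [e1, e3]
    show z i * ⇑(MemLp.toLp (fun _ => (1 : ℂ)) (memLp_const 1)) (prepend i x)
      = z i • ⇑(MemLp.toLp (fun _ => (1 : ℂ)) (memLp_const 1)) x
    rw [e2, e4, smul_eq_mul]
end
end
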